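/- arXiv:math/0605045 — 3 statements merged into one kernel-verified Lean document; each statement's English description precedes it below -/
import Mathlib

section
/- For every λ ∈ h and every x ∈ a, |G_λ(x)| ≤ G_{Re λ}(x), where Re λ ∈ a denotes the real part of λ and G_{Re λ} is the (real, positive) Opdam function with parameter Re λ. -/
open scoped BigOperators RealInnerProductSpace Classical

noncomputable section

variable {E : Type*} [NormedAddCommGroup E] [InnerProductSpace ℝ E] [FiniteDimensional ℝ E]

/-- The coroot `α∨ = 2α/|α|²`. -/
def coroot (α : E) : E := (2 / ⟪α, α⟫) • α

/-- The orthogonal reflection `r_α x = x - (α∨, x) α`. -/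
def rRefl (α : E) (x : E) : E := x - ⟪coroot α, x⟫ • α

/-- Data of an integral root system with positive subsystem and
a Weyl-invariant positive multiplicity function. -/
structure HOData (E : Type*) [NormedAddCommGroup E] [InnerProductSpace ℝ E] : Type _ where
  R : Finset E
  Rpos : Finset E
  k : E → ℝ
  k_pos : ∀ α ∈ R, 0 < k α
  root_ne_zero : ∀ α ∈ R, α ≠ 0
  pos_subset : Rpos ⊆ R
  pos_char : ∃ u : E, ∀ α ∈ R, (α ∈ Rpos ↔ 0 < ⟪α, u⟫)
  pos_or_neg : ∀ α ∈ R, α ∈ Rpos ∨ -α ∈ Rpos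
  neg_mem : ∀ α ∈ R, -α ∈ R
  integral : ∀ α ∈ R, ∀ β ∈ R, ∃ n : ℤ, ⟪coroot α, β⟫ = (n : ℝ)
  refl_mem : ∀ α ∈ R, ∀ β ∈ R, rRefl α β ∈ R
  k_inv : ∀ α ∈ R, ∀ β ∈ R, k (rRefl α β) = k β

/-- The Weyl group: the subgroup of linear isometries generated by the root reflections. -/
def weylGroup (D : HOData E) : Subgroup (E ≃ₗᵢ[ℝ] E) :=
  Subgroup.closure {w : E ≃ₗᵢ[ℝ] E | ∃ α ∈ D.R, ∀ x, w x = rRefl α x}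

/-- `ρ = (1/2) Σ_{α ∈ R⁺} k_α α`. -/
def rhoHO (D : HOData E) : E := (2:ℝ)⁻¹ • ∑ α ∈ D.Rpos, D.k α • α

/-- Regular points. -/
def HORegular (D : HOData E) (x : E) : Prop := ∀ α ∈ D.R, ⟪α, x⟫ ≠ 0

/-- The (open) positive Weyl chamber. -/
def posChamber (D : HOData E) : Set E := {x | ∀ α ∈ D.Rpos, 0 < ⟪α, x⟫}

/-- The positive indivisible roots `R₀⁺`. -/
def Rpos0 (D : HOData E) : Finset E := D.Rpos.filter (fun α => (2:ℝ)⁻¹ • α ∉ D.R)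

/-- The Opdam function `G_λ` for a real parameter `λ`: an analytic function,
normalized at `0`, satisfying the Cherednik differential-difference system. -/
def IsOpdamR (D : HOData E) (lam : E) (G : E → ℝ) : Prop :=
  AnalyticOnNhd ℝ G Set.univ ∧ G 0 = 1 ∧
  ∀ ξ x, HORegular D x →
    fderiv ℝ G x ξ =
      (∑ α ∈ D.Rpos, D.k α * ⟪α, ξ⟫ / (1 - Real.exp (-⟪α, x⟫)) * (G (rRefl α x) - G x))
      + ⟪rhoHO D + lam, ξ⟫ * G x

/-- The Opdam function `G_λ` for a complex parameter `λ = l1 + i l2 ∈ h`. -/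
def IsOpdamC (D : HOData E) (l1 l2 : E) (G : E → ℂ) : Prop :=
  AnalyticOnNhd ℝ G Set.univ ∧ G 0 = 1 ∧
  ∀ ξ x, HORegular D x →
    fderiv ℝ G x ξ =
      (∑ α ∈ D.Rpos, ((D.k α * ⟪α, ξ⟫ / (1 - Real.exp (-⟪α, x⟫)) : ℝ) : ℂ)
          * (G (rRefl α x) - G x))
      + (((⟪rhoHO D + l1, ξ⟫ : ℝ) : ℂ) + Complex.I * ((⟪l2, ξ⟫ : ℝ) : ℂ)) * G x

/-- The symmetrization `F(x) = |W|⁻¹ Σ_{w ∈ W} G(w x)` (real valued case). -/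
def Fsym (D : HOData E) [Fintype (weylGroup D)] (G : E → ℝ) (x : E) : ℝ :=
  (Fintype.card (weylGroup D) : ℝ)⁻¹ * ∑ w : weylGroup D, G (w.1 x)

/-- The symmetrization `F(x) = |W|⁻¹ Σ_{w ∈ W} G(w x)` (complex valued case). -/
def FsymC (D : HOData E) [Fintype (weylGroup D)] (G : E → ℂ) (x : E) : ℂ :=
  (Fintype.card (weylGroup D) : ℂ)⁻¹ * ∑ w : weylGroup D, G (w.1 x)

/-- `max_{w ∈ W} (w λ, x)`. -/
def maxW (D : HOData E) [Fintype (weylGroup D)] (lam x : E) : ℝ :=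
  ⨆ w : weylGroup D, ⟪w.1 lam, x⟫

set_option linter.unusedSectionVars false


lemma rRefl_smul (α : E) (t : ℝ) (x : E) : rRefl α (t • x) = t • rRefl α x := by
  simp [rRefl, real_inner_smul_right, smul_sub, smul_smul, mul_comm]

lemma exists_reflection_isometry (α : E) (hα : α ≠ 0) :
    ∃ w : E ≃ₗᵢ[ℝ] E, ∀ z, w z = rRefl α z := by
  refine ⟨Submodule.reflection ((ℝ ∙ α)ᗮ), fun z => ?_⟩
  have h1 : ((ℝ ∙ α)ᗮ.starProjection z : E) = z - (ℝ ∙ α).starProjection z :=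
    Submodule.starProjection_orthogonal_val (K := ℝ ∙ α) z
  rw [Submodule.reflection_apply, h1, Submodule.starProjection_singleton]
  have hn : ‖α‖^2 ≠ 0 := pow_ne_zero _ (norm_ne_zero_iff.mpr hα)
  rw [rRefl, coroot]
  rw [real_inner_smul_left, real_inner_self_eq_norm_sq]
  have : (2 / ‖α‖^2 * ⟪α, z⟫) = 2 * (⟪α, z⟫ / ‖α‖^2) := by ring
  rw [this]
  simp only [two_smul, smul_smul]
  simp only [RCLike.ofReal_real_eq_id, id_eq]
  module


/-- invariance property of Weyl group elements -/
def WProp (D : HOData E) (w : E ≃ₗᵢ[ℝ] E) : Prop :=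
  (∀ β ∈ D.R, w β ∈ D.R) ∧ ∀ v ∈ (Submodule.span ℝ (D.R : Set E))ᗮ, w v = v

lemma wProp_inv (D : HOData E) (w : E ≃ₗᵢ[ℝ] E) (h : WProp D w) : WProp D w⁻¹ := by
  obtain ⟨h1, h2⟩ := h
  have himg : D.R.image (fun β => w β) = D.R := by
    apply Finset.eq_of_subset_of_card_le
    · intro b hb
      obtain ⟨a, ha, rfl⟩ := Finset.mem_image.mp hb
      exact h1 a ha
    · rw [Finset.card_image_of_injective _ w.injective]
  constructor
  · intro β hβ
    rw [← himg] at hβ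
    obtain ⟨a, ha, hab⟩ := Finset.mem_image.mp hβ
    have : w⁻¹ β = a := by
      rw [← hab]; exact w.symm_apply_apply a
    rwa [this]
  · intro v hv
    have := h2 v hv
    calc w⁻¹ v = w⁻¹ (w v) := by rw [this]
    _ = v := w.symm_apply_apply v

lemma wProp_of_mem (D : HOData E) (w : E ≃ₗᵢ[ℝ] E) (hw : w ∈ weylGroup D) : WProp D w := by
  induction hw using Subgroup.closure_induction with
  | mem w hw =>
      obtain ⟨α, hα, hwa⟩ := hw
      constructor
      · intro β hβ; rw [hwa]; exact D.refl_mem α hα β hβ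
      · intro v hv
        rw [hwa, rRefl]
        have : ⟪coroot α, v⟫ = 0 := by
          have hmem : coroot α ∈ Submodule.span ℝ (D.R : Set E) :=
            Submodule.smul_mem _ _ (Submodule.subset_span hα)
          exact (Submodule.mem_orthogonal _ v).mp hv _ hmem
        simp [this]
  | one => exact ⟨fun β hβ => hβ, fun v _ => rfl⟩
  | mul a b _ _ ha hb =>
      exact ⟨fun β hβ => ha.1 _ (hb.1 β hβ), fun v hv => by
        have := hb.2 v hv
        show a (b v) = v
        rw [this, ha.2 v hv]⟩
  | inv a _ ha => exact wProp_inv D a ha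

lemma weylGroup_ext (D : HOData E) (w₁ w₂ : E ≃ₗᵢ[ℝ] E)
    (h₁ : WProp D w₁) (h₂ : WProp D w₂)
    (h : ∀ β ∈ D.R, w₁ β = w₂ β) : w₁ = w₂ := by
  have hsp : Submodule.span ℝ ((D.R : Set E) ∪ ((Submodule.span ℝ (D.R : Set E))ᗮ : Set E)) = ⊤ := by
    rw [Submodule.span_union, Submodule.span_eq]
    exact Submodule.sup_orthogonal_of_hasOrthogonalProjection
  apply LinearIsometryEquiv.ext
  intro v
  have hv : v ∈ Submodule.span ℝ ((D.R : Set E) ∪ ((Submodule.span ℝ (D.R : Set E))ᗮ : Set E)) := by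
    rw [hsp]; trivial
  have := LinearMap.eqOn_span (f := (w₁ : E ≃ₗᵢ[ℝ] E).toLinearEquiv.toLinearMap)
    (g := (w₂ : E ≃ₗᵢ[ℝ] E).toLinearEquiv.toLinearMap) (s := (D.R : Set E) ∪ _) ?_ hv
  · exact this
  · intro z hz
    rcases hz with hz | hz
    · exact h z hz
    · show w₁ z = w₂ z
      rw [h₁.2 z hz, h₂.2 z hz]

instance weylGroup_finite (D : HOData E) : Finite (weylGroup D) := by
  classical
  have : Function.Injective (fun w : weylGroup D => fun β : {b // b ∈ D.R} =>
      (⟨w.1 β.1, (wProp_of_mem D w.1 w.2).1 β.1 β.2⟩ : {b // b ∈ D.R})) := by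
    intro w₁ w₂ hww
    apply Subtype.ext
    apply weylGroup_ext D _ _ (wProp_of_mem D _ w₁.2) (wProp_of_mem D _ w₂.2)
    intro β hβ
    have := congrFun hww ⟨β, hβ⟩
    exact congrArg Subtype.val this
  exact Finite.of_injective _ this

open Filter Set Topology in
set_option maxHeartbeats 1000000 in
lemma gronwall_sys (O A : Finset E) (hO : O.Nonempty)
    (σ : E → E → E) (hσ : ∀ a ∈ A, ∀ y ∈ O, σ a y ∈ O)
    (gC : E → ℝ → ℂ) (gR : E → ℝ → ℝ) (m n : E → ℝ) (c : E → E → ℝ → ℝ)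
    (hc : ∀ y ∈ O, ∀ a ∈ A, ∀ t : ℝ, t ∈ Set.Ioo (0:ℝ) 1 → 0 ≤ c y a t)
    (hgC0 : ∀ y ∈ O, gC y 0 = 1) (hgR0 : ∀ y ∈ O, gR y 0 = 1)
    (hcontC : ∀ y ∈ O, Continuous (gC y)) (hcontR : ∀ y ∈ O, Continuous (gR y))
    (hdC : ∀ y ∈ O, ∀ t ∈ Set.Ioo (0:ℝ) 1, HasDerivAt (gC y)
       ((∑ a ∈ A, (c y a t : ℂ) * (gC (σ a y) t - gC y t))
         + ((m y : ℂ) + Complex.I * (n y : ℂ)) * gC y t) t)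
    (hdR : ∀ y ∈ O, ∀ t ∈ Set.Ioo (0:ℝ) 1, HasDerivAt (gR y)
       ((∑ a ∈ A, c y a t * (gR (σ a y) t - gR y t)) + m y * gR y t) t) :
    ∀ y ∈ O, ‖gC y 1‖ ≤ gR y 1 := by
  classical
  set φ : E → ℝ → ℝ := fun y t => ‖gC y t‖ - gR y t with hφdef
  set f : ℝ → ℝ := fun t => max (O.sup' hO fun y => φ y t) 0 with hfdef
  set K : ℝ := O.sup' hO fun y => |m y| with hKdef
  obtain ⟨y₀, hy₀⟩ := id hO
  have hK0 : 0 ≤ K := by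
    rw [hKdef]; exact le_trans (abs_nonneg (m y₀)) (Finset.le_sup' (fun y => |m y|) hy₀)
  have hφle : ∀ y ∈ O, ∀ t, φ y t ≤ f t := by
    intro y hy t
    rw [hfdef]
    exact le_trans (Finset.le_sup' (fun y => φ y t) hy) (le_max_left _ _)
  have hf0 : ∀ t, 0 ≤ f t := by intro t; rw [hfdef]; exact le_max_right _ _
  have hmK : ∀ y ∈ O, |m y| ≤ K := by
    intro y hy; rw [hKdef]; exact Finset.le_sup' (fun y => |m y|) hy
  have hfcont : Continuous f := by
    apply Continuous.max _ continuous_const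
    apply Continuous.finset_sup'_apply hO
    intro y hy
    exact ((hcontC y hy).norm).sub (hcontR y hy)
  have hfzero : f 0 = 0 := by
    have : ∀ y ∈ O, φ y 0 = 0 := by
      intro y hy; simp [hφdef, hgC0 y hy, hgR0 y hy]
    simp only [hfdef]
    rw [Finset.sup'_congr hO rfl this, Finset.sup'_const, max_self]
  -- the key Gronwall estimate on [a, 1]
  have key : ∀ a ∈ Set.Ioo (0:ℝ) 1, f 1 ≤ f a * Real.exp (K * (1 - a)) := by
    intro a ha
    have hmain := le_gronwallBound_of_liminf_deriv_right_le (f := f)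
      (f' := fun t => K * f t) (δ := f a) (K := K) (ε := 0) (a := a) (b := 1)
      hfcont.continuousOn ?_ le_rfl ?_ 1 (Set.right_mem_Icc.mpr ha.2.le)
    · rwa [gronwallBound_ε0] at hmain
    · -- the liminf/frequently hypothesis
      intro t ht r hr
      have ht' : t ∈ Set.Ioo (0:ℝ) 1 := ⟨lt_of_lt_of_le ha.1 ht.1, ht.2⟩
      have hr' : K * f t < r := hr
      have hrpos : 0 < r := lt_of_le_of_lt (mul_nonneg hK0 (hf0 t)) hr'
      -- per-y eventual estimate
      have hyev : ∀ y ∈ O, ∀ᶠ z in 𝓝[>] t, φ y z < f t + (z - t) * r := by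
        intro y hy
        set S : ℝ := ∑ a ∈ A, c y a t with hSdef
        clear_value S
        have hSnn : 0 ≤ S := by
          rw [hSdef]; exact Finset.sum_nonneg fun a haA => hc y hy a haA t ht'
        set DC : ℂ := (∑ a ∈ A, (c y a t : ℂ) * (gC (σ a y) t - gC y t))
          + ((m y : ℂ) + Complex.I * (n y : ℂ)) * gC y t with hDCdef
        clear_value DC
        set DR : ℝ := (∑ a ∈ A, c y a t * (gR (σ a y) t - gR y t)) + m y * gR y t with hDRdef
        clear_value DR
        have hsub : 𝓝[>] t ≤ 𝓝[≠] t :=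
          nhdsWithin_mono t fun z hz => by simpa using (ne_of_gt hz)
        have hsC : Tendsto (slope (gC y) t) (𝓝[>] t) (𝓝 DC) := by
          rw [hDCdef]
          exact ((hasDerivAt_iff_tendsto_slope).mp (hdC y hy t ht')).mono_left hsub
        have hsR : Tendsto (slope (gR y) t) (𝓝[>] t) (𝓝 DR) := by
          rw [hDRdef]
          exact ((hasDerivAt_iff_tendsto_slope).mp (hdR y hy t ht')).mono_left hsub
        -- eventual smallness facts
        have ev1 : ∀ᶠ z in 𝓝[>] t, (z - t) * (S + |m y|) ≤ 1/2 := by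
          have hc0 : Continuous (fun z : ℝ => (z - t) * (S + |m y|)) :=
            (continuous_sub_right t).mul continuous_const
          have h0 : Tendsto (fun z : ℝ => (z - t) * (S + |m y|)) (𝓝[>] t) (𝓝 0) := by
            have := hc0.tendsto t
            simp only [sub_self, zero_mul] at this
            exact this.mono_left nhdsWithin_le_nhds
          exact h0.eventually_le_const (by norm_num)
        have ev2 : ∀ᶠ z in 𝓝[>] t,
            ‖slope (gC y) t z - DC‖ + |slope (gR y) t z - DR|
              + (z - t) * (n y)^2 * ‖gC y t‖ < r - K * f t := by
          have h1 : Tendsto (fun z => ‖slope (gC y) t z - DC‖) (𝓝[>] t) (𝓝 0) := by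
            have h1' := (hsC.sub (tendsto_const_nhds (x := DC))).norm
            simpa using h1'
          have h2 : Tendsto (fun z => |slope (gR y) t z - DR|) (𝓝[>] t) (𝓝 0) := by
            have h2' := (hsR.sub (tendsto_const_nhds (x := DR))).abs
            simpa using h2'
          have h3 : Tendsto (fun z : ℝ => (z - t) * (n y)^2 * ‖gC y t‖) (𝓝[>] t) (𝓝 0) := by
            have hc0 : Continuous (fun z : ℝ => (z - t) * (n y)^2 * ‖gC y t‖) :=
              ((continuous_sub_right t).mul continuous_const).mul continuous_const
            have := hc0.tendsto t
            simp only [sub_self, zero_mul] at this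
            exact this.mono_left nhdsWithin_le_nhds
          have := (h1.add h2).add h3
          simp only [add_zero] at this
          exact this.eventually_lt_const (by linarith)
        filter_upwards [self_mem_nhdsWithin, ev1, ev2] with z hz hev1 hev2
        have hzt : t < z := hz
        have hh : 0 < z - t := sub_pos.mpr hzt
        have hzne : z ≠ t := ne_of_gt hzt
        -- slope identities
        have eqC : gC y z = gC y t + (z - t) • slope (gC y) t z := by
          rw [slope_def_module, smul_inv_smul₀ (sub_ne_zero.mpr hzne)]
          abel
        have eqR : gR y z = gR y t + (z - t) * slope (gR y) t z := by
          have h2 : gR y z = gR y t + (z - t) • slope (gR y) t z := by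
            rw [slope_def_module, smul_inv_smul₀ (sub_ne_zero.mpr hzne)]
            abel
          simpa using h2
        -- main estimate
        set Pu : ℝ := ∑ a ∈ A, c y a t * ‖gC (σ a y) t‖ with hPudef
        clear_value Pu
        set Pv : ℝ := ∑ a ∈ A, c y a t * gR (σ a y) t with hPvdef
        clear_value Pv
        -- Step A
        have stepA : ‖gC y z‖ ≤ ‖gC y t + (z - t) • DC‖ + (z - t) * ‖slope (gC y) t z - DC‖ := by
          have hid : gC y t + (z - t) • slope (gC y) t z
              = (gC y t + (z - t) • DC) + (z - t) • (slope (gC y) t z - DC) := by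
            rw [smul_sub]; abel
          rw [eqC, hid]
          refine le_trans (norm_add_le _ _) ?_
          rw [norm_smul, Real.norm_eq_abs, abs_of_pos hh]
        -- expansion of the complex derivative
        have e1 : ∑ a ∈ A, (c y a t : ℂ) * (gC (σ a y) t - gC y t)
            = (∑ a ∈ A, (c y a t : ℂ) * gC (σ a y) t) - (S : ℂ) * gC y t := by
          rw [hSdef]
          push_cast
          rw [Finset.sum_mul, ← Finset.sum_sub_distrib]
          exact Finset.sum_congr rfl fun a _ => by ring
        have e2 : ∑ a ∈ A, (((z - t) * c y a t : ℝ) : ℂ) * gC (σ a y) t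
            = ((z - t : ℝ) : ℂ) * ∑ a ∈ A, (c y a t : ℂ) * gC (σ a y) t := by
          push_cast
          rw [Finset.mul_sum]
          exact Finset.sum_congr rfl fun a _ => by ring
        have hexp : gC y t + (z - t) • DC
            = (((1 - (z - t) * S + (z - t) * m y : ℝ) : ℂ)
                + ((z - t) * n y : ℝ) * Complex.I) * gC y t
              + ∑ a ∈ A, (((z - t) * c y a t : ℝ) : ℂ) * gC (σ a y) t := by
          rw [e2, hDCdef, e1, Complex.real_smul]
          push_cast
          ring
        -- norm of the scalar coefficient
        have haa : (1:ℝ)/2 ≤ 1 - (z - t) * S + (z - t) * m y := by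
          have h1 : (z - t) * (-|m y|) ≤ (z - t) * m y :=
            mul_le_mul_of_nonneg_left (neg_abs_le (m y)) hh.le
          have h2 : (z - t) * (S + |m y|) = (z - t) * S + (z - t) * |m y| := by ring
          rw [h2] at hev1
          linarith
        have normcoef : ‖(((1 - (z - t) * S + (z - t) * m y : ℝ) : ℂ)
            + ((z - t) * n y : ℝ) * Complex.I)‖
            ≤ (1 - (z - t) * S + (z - t) * m y) + ((z - t) * n y)^2 := by
          set aa : ℝ := 1 - (z - t) * S + (z - t) * m y with haadef
          set bb : ℝ := (z - t) * n y with hbbdef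
          have hw : ‖((aa : ℂ) + (bb : ℝ) * Complex.I)‖ = Real.sqrt (aa^2 + bb^2) := by
            rw [Complex.norm_def, Complex.normSq_apply]
            have hre : ((aa : ℂ) + (bb : ℝ) * Complex.I).re = aa := by simp
            have him : ((aa : ℂ) + (bb : ℝ) * Complex.I).im = bb := by simp
            rw [hre, him]
            congr 1
            ring
          rw [hw]
          calc Real.sqrt (aa^2 + bb^2) ≤ Real.sqrt ((aa + bb^2)^2) :=
                Real.sqrt_le_sqrt (by nlinarith [sq_nonneg bb, sq_nonneg (bb^2)])
            _ = aa + bb^2 := Real.sqrt_sq (by nlinarith [sq_nonneg bb])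
        -- Step B
        have hPu : ∑ a ∈ A, (z - t) * c y a t * ‖gC (σ a y) t‖ = (z - t) * Pu := by
          rw [hPudef, Finset.mul_sum]
          exact Finset.sum_congr rfl fun a _ => by ring
        have stepB : ‖gC y t + (z - t) • DC‖
            ≤ (1 - (z - t) * S + (z - t) * m y + ((z - t) * n y)^2) * ‖gC y t‖
              + (z - t) * Pu := by
          rw [hexp]
          refine le_trans (norm_add_le _ _) ?_
          have t1 : ‖(((1 - (z - t) * S + (z - t) * m y : ℝ) : ℂ)
              + ((z - t) * n y : ℝ) * Complex.I) * gC y t‖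
              ≤ (1 - (z - t) * S + (z - t) * m y + ((z - t) * n y)^2) * ‖gC y t‖ := by
            rw [norm_mul]
            have hmm := mul_le_mul_of_nonneg_right normcoef (norm_nonneg (gC y t))
            linarith only [hmm]
          have t2 : ‖∑ a ∈ A, (((z - t) * c y a t : ℝ) : ℂ) * gC (σ a y) t‖
              ≤ (z - t) * Pu := by
            rw [← hPu]
            refine le_trans (norm_sum_le _ _) (Finset.sum_le_sum fun a haA => ?_)
            rw [norm_mul, Complex.norm_real, Real.norm_eq_abs,
              abs_of_nonneg (mul_nonneg hh.le (hc y hy a haA t ht'))]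
          linarith only [t1, t2]
        -- Step C (real lower bound)
        have stepC : gR y t + (z - t) * DR - (z - t) * |slope (gR y) t z - DR| ≤ gR y z := by
          rw [eqR]
          have h1 : -(|slope (gR y) t z - DR|) ≤ slope (gR y) t z - DR :=
            neg_abs_le _
          linarith only [mul_le_mul_of_nonneg_left h1 hh.le]
        -- rewrite DR
        have hDRe : DR = Pv - S * gR y t + m y * gR y t := by
          rw [hDRdef, hSdef, hPvdef, Finset.sum_mul, ← Finset.sum_sub_distrib]
          have he : ∑ a ∈ A, (c y a t * (gR (σ a y) t - gR y t))
              = ∑ a ∈ A, (c y a t * gR (σ a y) t - c y a t * gR y t) :=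
            Finset.sum_congr rfl fun a _ => by ring
          rw [he]
        -- coupling bound
        have hcoup : Pu - Pv ≤ S * f t := by
          rw [hPudef, hPvdef, hSdef, Finset.sum_mul, ← Finset.sum_sub_distrib]
          refine Finset.sum_le_sum fun a haA => ?_
          have hφa : ‖gC (σ a y) t‖ - gR (σ a y) t ≤ f t := hφle (σ a y) (hσ a haA y hy) t
          have hca := hc y hy a haA t ht'
          have : c y a t * ‖gC (σ a y) t‖ - c y a t * gR (σ a y) t
              = c y a t * (‖gC (σ a y) t‖ - gR (σ a y) t) := by ring
          rw [this]
          exact mul_le_mul_of_nonneg_left hφa hca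
        -- put everything together
        have hφuv : ‖gC y t‖ - gR y t ≤ f t := hφle y hy t
        have hft0 : 0 ≤ f t := hf0 t
        have hmyK : m y ≤ K := le_trans (le_abs_self (m y)) (hmK y hy)
        have hEt : ‖slope (gC y) t z - DC‖ + |slope (gR y) t z - DR|
            + (z - t) * (n y)^2 * ‖gC y t‖ < r - K * f t := hev2
        have goal1 : ‖gC y z‖ - gR y z
            ≤ (‖gC y t‖ - gR y t)
              + (z - t) * ((Pu - Pv) - S * (‖gC y t‖ - gR y t) + m y * (‖gC y t‖ - gR y t))
              + (z - t) * (‖slope (gC y) t z - DC‖ + |slope (gR y) t z - DR|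
                  + (z - t) * (n y)^2 * ‖gC y t‖) := by
          have hDRe2 : (z - t) * DR = (z - t) * (Pv - S * gR y t + m y * gR y t) := by
            rw [hDRe]
          linarith only [stepA, stepB, stepC, hDRe2]
        have q1 : (z - t) * (Pu - Pv) ≤ (z - t) * (S * f t) :=
          mul_le_mul_of_nonneg_left hcoup hh.le
        have hint1 : 0 ≤ (f t - (‖gC y t‖ - gR y t)) * (1 - (z - t) * S + (z - t) * m y) :=
          mul_nonneg (by linarith) (by linarith)
        have hint2 : 0 ≤ (z - t) * (f t * (K - m y)) :=
          mul_nonneg hh.le (mul_nonneg hft0 (by linarith))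
        have goal2 : (‖gC y t‖ - gR y t)
            + (z - t) * ((Pu - Pv) - S * (‖gC y t‖ - gR y t) + m y * (‖gC y t‖ - gR y t))
            ≤ f t + (z - t) * (K * f t) := by linarith only [q1, hint1, hint2]
        have goal3 : (z - t) * (‖slope (gC y) t z - DC‖ + |slope (gR y) t z - DR|
            + (z - t) * (n y)^2 * ‖gC y t‖) < (z - t) * (r - K * f t) :=
          (mul_lt_mul_iff_right₀ hh).mpr hEt
        have : ‖gC y z‖ - gR y z < f t + (z - t) * r := by linarith only [goal1, goal2, goal3]
        exact this
      -- combine the per-y estimates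
      have hall : ∀ᶠ z in 𝓝[>] t, ∀ y ∈ O, φ y z < f t + (z - t) * r :=
        (Filter.eventually_all_finset O).mpr hyev
      refine Filter.Eventually.frequently ?_
      filter_upwards [self_mem_nhdsWithin, hall] with z hz hzall
      have hh : (0:ℝ) < z - t := sub_pos.mpr hz
      have hfz : f z < f t + (z - t) * r := by
        apply max_lt
        · exact (Finset.sup'_lt_iff hO).mpr fun y hy => hzall y hy
        · have := mul_pos hh hrpos
          have := hf0 t
          linarith
      rw [inv_mul_lt_iff₀ hh]
      linarith
    · intro x _
      simp
  -- let a → 0⁺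
  have hlim : Tendsto (fun a => f a * Real.exp (K * (1 - a))) (𝓝[>] (0:ℝ)) (𝓝 0) := by
    have hc0 : Continuous (fun a : ℝ => f a * Real.exp (K * (1 - a))) :=
      hfcont.mul (Real.continuous_exp.comp (continuous_const.mul
        (continuous_const.sub continuous_id)))
    have h0 := hc0.tendsto 0
    rw [show f 0 * Real.exp (K * (1 - 0)) = 0 by rw [hfzero]; ring] at h0
    exact h0.mono_left nhdsWithin_le_nhds
  have hf1 : f 1 ≤ 0 := by
    refine ge_of_tendsto hlim ?_
    filter_upwards [Ioo_mem_nhdsGT_of_mem (Set.left_mem_Ico.mpr one_pos)] with a ha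
    exact key a ha
  intro y hy
  have h1 : φ y 1 ≤ 0 := le_trans (hφle y hy 1) hf1
  have h2 : ‖gC y 1‖ - gR y 1 ≤ 0 := h1
  linarith

lemma exists_regular_aux (s : Finset E) (hs : ∀ α ∈ s, α ≠ 0) :
    ∃ v : E, ∀ α ∈ s, ⟪α, v⟫ ≠ 0 := by
  classical
  induction s using Finset.induction_on with
  | empty => exact ⟨0, by simp⟩
  | @insert α s hαs ih =>
      obtain ⟨v, hv⟩ := ih fun β hβ => hs β (Finset.mem_insert_of_mem hβ)
      have hα : α ≠ 0 := hs α (Finset.mem_insert_self _ _)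
      obtain ⟨t0, ht0⟩ := Infinite.exists_notMem_finset
        ((insert α s).image fun β => -⟪β, v⟫ / ⟪β, α⟫)
      refine ⟨v + t0 • α, fun β hβ => ?_⟩
      rw [inner_add_right, real_inner_smul_right]
      intro hzero
      by_cases hba : ⟪β, α⟫ = 0
      · rcases Finset.mem_insert.mp hβ with rfl | hβs
        · exact hα (inner_self_eq_zero.mp hba)
        · rw [hba, mul_zero, add_zero] at hzero
          exact hv β hβs hzero
      · apply ht0
        have ht0eq : t0 = -⟪β, v⟫ / ⟪β, α⟫ := by
          field_simp
          linarith
        rw [ht0eq]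
        exact Finset.mem_image_of_mem _ hβ


open Filter Set Topology in
/-- for every `λ ∈ h` and every `x ∈ a`, `|G_λ(x)| ≤ G_{Re λ}(x)`. -/
theorem statement1 (D : HOData E) (l1 l2 : E) (G : E → ℂ) (Gre : E → ℝ)
    (hG : IsOpdamC D l1 l2 G) (hGre : IsOpdamR D l1 Gre) :
    ∀ x : E, ‖G x‖ ≤ Gre x := by
  classical
  have hGcont : Continuous G := continuous_iff_continuousAt.mpr fun z =>
    (hG.1 z (Set.mem_univ z)).continuousAt
  have hGrecont : Continuous Gre := continuous_iff_continuousAt.mpr fun z =>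
    (hGre.1 z (Set.mem_univ z)).continuousAt
  -- Main case: regular points
  have main : ∀ x : E, HORegular D x → ‖G x‖ ≤ Gre x := by
    intro x hxreg
    -- the finite Weyl orbit of x
    have hOfin : (Set.range fun w : weylGroup D => w.1 x).Finite := Set.finite_range _
    set O : Finset E := hOfin.toFinset with hOdef
    have hxO : x ∈ O := by
      rw [hOdef, Set.Finite.mem_toFinset]
      exact ⟨1, rfl⟩
    have hO : O.Nonempty := ⟨x, hxO⟩
    -- regularity of orbit points
    have horb : ∀ y ∈ O, HORegular D y := by
      intro y hy
      rw [hOdef, Set.Finite.mem_toFinset] at hy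
      obtain ⟨w, rfl⟩ := hy
      intro β hβ
      have hwinv := wProp_of_mem D (w⁻¹).1 (w⁻¹).2
      have hβ' : (w.1).symm β ∈ D.R := hwinv.1 β hβ
      have : ⟪β, w.1 x⟫ = ⟪(w.1).symm β, x⟫ := by
        conv_lhs => rw [← (w.1).apply_symm_apply β]
        rw [(w.1).inner_map_map]
      rw [this]
      exact hxreg _ hβ'
    -- closure under reflections
    have hσO : ∀ a ∈ D.Rpos, ∀ y ∈ O, rRefl a y ∈ O := by
      intro a ha y hy
      rw [hOdef, Set.Finite.mem_toFinset] at hy ⊢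
      obtain ⟨w, rfl⟩ := hy
      have haR : a ∈ D.R := D.pos_subset ha
      obtain ⟨σa, hσa⟩ := exists_reflection_isometry a (D.root_ne_zero a haR)
      have hσmem : σa ∈ weylGroup D :=
        Subgroup.subset_closure ⟨a, haR, hσa⟩
      refine ⟨(⟨σa, hσmem⟩ : weylGroup D) * w, ?_⟩
      show σa (w.1 x) = rRefl a (w.1 x)
      exact hσa _
    -- the data for the comparison lemma
    set gC : E → ℝ → ℂ := fun y t => G (t • y) with hgCdef
    set gR : E → ℝ → ℝ := fun y t => Gre (t • y) with hgRdef
    set mm : E → ℝ := fun y => ⟪rhoHO D + l1, y⟫ with hmmdef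
    set nn : E → ℝ := fun y => ⟪l2, y⟫ with hnndef
    set cc : E → E → ℝ → ℝ :=
      fun y a t => D.k a * ⟪a, y⟫ / (1 - Real.exp (-(t * ⟪a, y⟫))) with hccdef
    have hreg_smul : ∀ y ∈ O, ∀ t : ℝ, 0 < t → HORegular D (t • y) := by
      intro y hy t ht α hα
      rw [real_inner_smul_right]
      exact mul_ne_zero (ne_of_gt ht) (horb y hy α hα)
    have key := gronwall_sys O D.Rpos hO (fun a y => rRefl a y) hσO gC gR mm nn cc
      ?_ ?_ ?_ ?_ ?_ ?_ ?_
    · have := key x hxO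
      simpa [hgCdef, hgRdef] using this
    · -- nonnegativity of the coefficients
      intro y hy a ha t ht
      obtain ⟨ht0, ht1⟩ := ht
      rw [hccdef]
      have hs : ⟪a, y⟫ ≠ 0 := horb y hy a (D.pos_subset ha)
      have hk : 0 < D.k a := D.k_pos a (D.pos_subset ha)
      rcases lt_or_gt_of_ne hs with hneg | hpos
      · apply le_of_lt
        apply div_pos_of_neg_of_neg
        · exact mul_neg_of_pos_of_neg hk hneg
        · rw [sub_neg]
          rw [Real.one_lt_exp_iff]
          nlinarith [mul_pos ht0 (neg_pos.mpr hneg)]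
      · apply le_of_lt
        apply div_pos (mul_pos hk hpos)
        rw [sub_pos]
        rw [Real.exp_lt_one_iff]
        nlinarith [mul_pos ht0 hpos]
    · intro y _; rw [hgCdef]; simp [hG.2.1]
    · intro y _; rw [hgRdef]; simp [hGre.2.1]
    · intro y _
      rw [hgCdef]
      exact hGcont.comp (continuous_id.smul continuous_const)
    · intro y _
      rw [hgRdef]
      exact hGrecont.comp (continuous_id.smul continuous_const)
    · -- complex derivative
      intro y hy t ht
      have hreg : HORegular D (t • y) := hreg_smul y hy t ht.1
      have hdiff : DifferentiableAt ℝ G (t • y) :=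
        (hG.1 (t • y) (Set.mem_univ _)).differentiableAt
      have hline : HasDerivAt (fun s : ℝ => s • y) y t := by
        simpa using (hasDerivAt_id t).smul_const y
      have hcomp := hdiff.hasFDerivAt.comp_hasDerivAt t hline
      have heq := hG.2.2 y (t • y) hreg
      rw [heq] at hcomp
      have hval : (∑ a ∈ D.Rpos, ((cc y a t : ℝ) : ℂ) * (gC (rRefl a y) t - gC y t))
          + ((mm y : ℂ) + Complex.I * (nn y : ℂ)) * gC y t
          = (∑ α ∈ D.Rpos, ((D.k α * ⟪α, y⟫ / (1 - Real.exp (-⟪α, t • y⟫)) : ℝ) : ℂ)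
              * (G (rRefl α (t • y)) - G (t • y)))
            + (((⟪rhoHO D + l1, y⟫ : ℝ) : ℂ) + Complex.I * ((⟪l2, y⟫ : ℝ) : ℂ)) * G (t • y) := by
        congr 1
        apply Finset.sum_congr rfl
        intro a _
        simp only [hccdef, hgCdef, rRefl_smul, real_inner_smul_right]
      rw [hval]
      exact hcomp
    · -- real derivative
      intro y hy t ht
      have hreg : HORegular D (t • y) := hreg_smul y hy t ht.1
      have hdiff : DifferentiableAt ℝ Gre (t • y) :=
        (hGre.1 (t • y) (Set.mem_univ _)).differentiableAt
      have hline : HasDerivAt (fun s : ℝ => s • y) y t := by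
        simpa using (hasDerivAt_id t).smul_const y
      have hcomp := hdiff.hasFDerivAt.comp_hasDerivAt t hline
      have heq := hGre.2.2 y (t • y) hreg
      rw [heq] at hcomp
      have hval : (∑ a ∈ D.Rpos, cc y a t * (gR (rRefl a y) t - gR y t)) + mm y * gR y t
          = (∑ α ∈ D.Rpos, D.k α * ⟪α, y⟫ / (1 - Real.exp (-⟪α, t • y⟫))
              * (Gre (rRefl α (t • y)) - Gre (t • y)))
            + ⟪rhoHO D + l1, y⟫ * Gre (t • y) := by
        congr 1
        apply Finset.sum_congr rfl
        intro a _
        simp only [hccdef, hgRdef, rRefl_smul, real_inner_smul_right]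
      rw [hval]
      exact hcomp
  -- general case by density
  intro x
  obtain ⟨v, hv⟩ := exists_regular_aux D.R D.root_ne_zero
  set s : Finset ℝ := D.R.image fun α => -⟪α, x⟫ / ⟪α, v⟫ with hsdef
  have hgood : ∀ t : ℝ, t ∉ (s : Set ℝ) → HORegular D (x + t • v) := by
    intro t hts α hα
    rw [inner_add_right, real_inner_smul_right]
    intro hzero
    apply hts
    have hαv : ⟪α, v⟫ ≠ 0 := hv α hα
    have : t = -⟪α, x⟫ / ⟪α, v⟫ := by
      field_simp
      linarith
    rw [this]
    exact_mod_cast Finset.mem_coe.mpr (Finset.mem_image_of_mem _ hα)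
  have hdense : Dense ((s : Set ℝ)ᶜ) := (s.countable_toSet).dense_compl ℝ
  have hneBot : (𝓝[(s : Set ℝ)ᶜ] (0:ℝ)).NeBot :=
    mem_closure_iff_nhdsWithin_neBot.mp (hdense 0)
  have htend : Tendsto (fun t : ℝ => Gre (x + t • v) - ‖G (x + t • v)‖)
      (𝓝[(s : Set ℝ)ᶜ] (0:ℝ)) (𝓝 (Gre x - ‖G x‖)) := by
    have hc : Continuous (fun t : ℝ => Gre (x + t • v) - ‖G (x + t • v)‖) := by
      have hl : Continuous (fun t : ℝ => x + t • v) :=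
        continuous_const.add (continuous_id.smul continuous_const)
      exact (hGrecont.comp hl).sub ((hGcont.comp hl).norm)
    have := hc.tendsto 0
    simp only [zero_smul, add_zero] at this
    exact this.mono_left nhdsWithin_le_nhds
  have hev : ∀ᶠ t in 𝓝[(s : Set ℝ)ᶜ] (0:ℝ),
      0 ≤ Gre (x + t • v) - ‖G (x + t • v)‖ := by
    filter_upwards [eventually_mem_nhdsWithin] with t ht
    have := main (x + t • v) (hgood t ht)
    linarith
  have : 0 ≤ Gre x - ‖G x‖ := ge_of_tendsto htend hev
  linarith
end
end

section
/- (1) For every λ ∈ h and every x ∈ a, |F_λ(x)| ≤ F_{Re λ}(x). (2) For every λ ∈ a and every x ∈ a, F_λ(x) ≤ F_0(x) · e^{max_{w∈W} (wλ, x)}. -/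
open scoped BigOperators RealInnerProductSpace Classical

noncomputable section

variable {E : Type*} [NormedAddCommGroup E] [InnerProductSpace ℝ E] [FiniteDimensional ℝ E]

-- Section B : reflections and Weyl group
open scoped Topology
open Set Filter

section SectionB
variable {E : Type*} [NormedAddCommGroup E] [InnerProductSpace ℝ E] [FiniteDimensional ℝ E]

lemma inner_coroot (α x : E) : ⟪coroot α, x⟫ = 2 / ⟪α, α⟫ * ⟪α, x⟫ := by
  rw [coroot, real_inner_smul_left]

lemma coroot_self (α : E) (hα : α ≠ 0) : ⟪coroot α, α⟫ = 2 := by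
  rw [inner_coroot, div_mul_eq_mul_div, mul_div_assoc,
    div_self (inner_self_ne_zero.2 hα), mul_one]

lemma rRefl_inner_coroot (α x : E) (hα : α ≠ 0) :
    ⟪coroot α, rRefl α x⟫ = -⟪coroot α, x⟫ := by
  rw [rRefl, inner_sub_right, real_inner_smul_right, coroot_self α hα]
  ring

lemma rRefl_involutive (α : E) (hα : α ≠ 0) : Function.Involutive (rRefl α) := by
  intro x
  rw [rRefl, rRefl_inner_coroot α x hα, neg_smul, sub_neg_eq_add, rRefl]
  abel

lemma rRefl_norm (α x : E) (hα : α ≠ 0) : ‖rRefl α x‖ = ‖x‖ := by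
  have h : ⟪rRefl α x, rRefl α x⟫ = ⟪x, x⟫ := by
    rw [rRefl, inner_sub_left, inner_sub_right, inner_sub_right,
      real_inner_smul_left, real_inner_smul_left, real_inner_smul_right,
      real_inner_smul_right]
    have hc : ⟪coroot α, x⟫ * ⟪α, α⟫ = 2 * ⟪α, x⟫ := by
      rw [inner_coroot]
      field_simp
    have hsym : ⟪α, x⟫ = ⟪x, α⟫ := real_inner_comm x α
    linear_combination (⟪coroot α, x⟫) * hc + (⟪coroot α, x⟫) * hsym
  have h3 : ‖rRefl α x‖^2 = ‖x‖^2 := by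
    rw [← real_inner_self_eq_norm_sq, ← real_inner_self_eq_norm_sq]
    exact h
  have h4 := congrArg Real.sqrt h3
  rwa [Real.sqrt_sq (norm_nonneg _), Real.sqrt_sq (norm_nonneg _)] at h4

/-- The reflection as a linear map. -/
noncomputable def rLin (α : E) : E →ₗ[ℝ] E where
  toFun x := rRefl α x
  map_add' x y := by
    simp only [rRefl, inner_add_right, add_smul]
    abel
  map_smul' c x := by
    simp only [rRefl, real_inner_smul_right, RingHom.id_apply, smul_sub, smul_smul]

/-- The reflection as a linear isometry equivalence. -/
noncomputable def rIso (α : E) (hα : α ≠ 0) : E ≃ₗᵢ[ℝ] E :=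
  ⟨LinearEquiv.ofInvolutive (rLin α) (rRefl_involutive α hα), fun x => rRefl_norm α x hα⟩

@[simp] lemma rIso_apply (α : E) (hα : α ≠ 0) (x : E) : rIso α hα x = rRefl α x := rfl

lemma rIso_mem (D : HOData E) {α : E} (hαR : α ∈ D.R) :
    rIso α (D.root_ne_zero α hαR) ∈ weylGroup D :=
  Subgroup.subset_closure ⟨α, hαR, fun _ => rfl⟩

lemma weyl_image (D : HOData E) {w : E ≃ₗᵢ[ℝ] E} (hw : w ∈ weylGroup D) :
    Finset.image w D.R = D.R := by
  induction hw using Subgroup.closure_induction with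
  | mem g hg =>
    obtain ⟨α, hα, hgα⟩ := hg
    apply Finset.eq_of_subset_of_card_le
    · intro y hy
      obtain ⟨β, hβ, rfl⟩ := Finset.mem_image.1 hy
      rw [hgα]
      exact D.refl_mem α hα β hβ
    · rw [Finset.card_image_of_injective _ g.injective]
  | one => simp [Finset.image_id]
  | mul g h _ _ hg hh =>
    rw [LinearIsometryEquiv.coe_mul, ← Finset.image_image, hh, hg]
  | inv g _ hg =>
    apply Finset.eq_of_subset_of_card_le
    · intro y hy
      obtain ⟨β, hβ, rfl⟩ := Finset.mem_image.1 hy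
      obtain ⟨ζ, hζ, hzβ⟩ := Finset.mem_image.1 (hg ▸ hβ)
      have : (⇑g⁻¹) β = ζ := by
        rw [← hzβ, LinearIsometryEquiv.coe_inv, LinearIsometryEquiv.symm_apply_apply]
      rw [this]
      exact hζ
    · rw [Finset.card_image_of_injective _ (g⁻¹).injective]

lemma weyl_root_mem (D : HOData E) {w : E ≃ₗᵢ[ℝ] E} (hw : w ∈ weylGroup D)
    {α : E} (hα : α ∈ D.R) : w α ∈ D.R := by
  rw [← weyl_image D hw]
  exact Finset.mem_image_of_mem _ hα

lemma inner_weyl (w : E ≃ₗᵢ[ℝ] E) (a x : E) : ⟪a, w x⟫ = ⟪w.symm a, x⟫ := by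
  conv_lhs => rw [← w.apply_symm_apply a]
  exact w.inner_map_map (w.symm a) x

lemma weyl_regular (D : HOData E) {w : E ≃ₗᵢ[ℝ] E} (hw : w ∈ weylGroup D)
    {x : E} (hx : HORegular D x) {t : ℝ} (ht : t ≠ 0) : HORegular D (w (t • x)) := by
  intro α hα
  rw [inner_weyl, real_inner_smul_right]
  have : w.symm α ∈ D.R := weyl_root_mem D (inv_mem hw) hα
  exact mul_ne_zero ht (hx _ this)

end SectionB

lemma maxPrinciple {ι : Type*} [Fintype ι] [Nonempty ι] (δ : ι → ℝ → ℝ) (a b K : ℝ)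
    (hK : 0 ≤ K) (hcont : ∀ i, Continuous (δ i))
    (hder : ∀ t ∈ Set.Ico a b, ∀ i, (∀ j, δ j t ≤ δ i t) → 0 ≤ δ i t →
      ∀ r, K * δ i t < r → ∀ᶠ z in 𝓝[>] t, δ i z - δ i t < r * (z - t)) :
    ∀ t ∈ Set.Icc a b, ∀ i, δ i t ≤
      (max (Finset.univ.sup' Finset.univ_nonempty (fun j => δ j a)) 0) * Real.exp (K * (t - a)) := by
  classical
  let M : ℝ → ℝ := fun t => Finset.univ.sup' Finset.univ_nonempty (fun j => δ j t)
  have hMle : ∀ j t, δ j t ≤ M t := fun j t =>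
    Finset.le_sup' (fun i => δ i t) (Finset.mem_univ j)
  have hMex : ∀ t, ∃ j, M t = δ j t := by
    intro t
    obtain ⟨j, -, hj⟩ := Finset.exists_mem_eq_sup' Finset.univ_nonempty (fun i => δ i t)
    exact ⟨j, hj⟩
  let f : ℝ → ℝ := fun t => max (M t) 0
  have hMc : Continuous M := by
    apply continuous_iff_continuousAt.2
    intro t
    exact ContinuousAt.finset_sup'_apply Finset.univ_nonempty
      (fun i _ => (hcont i).continuousAt)
  have hfc : Continuous f := hMc.max continuous_const
  have hfge : ∀ t, 0 ≤ f t := fun t => le_max_right _ _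
  have key : ∀ t ∈ Set.Icc a b, f t ≤ gronwallBound (f a) K 0 (t - a) := by
    apply le_gronwallBound_of_liminf_deriv_right_le (f' := fun t => K * f t)
      hfc.continuousOn
    · -- liminf condition
      intro t ht r hr
      have hr0 : 0 < r := lt_of_le_of_lt (mul_nonneg hK (hfge t)) hr
      have hkey : ∀ᶠ z in 𝓝[>] t, f z - f t < r * (z - t) := by
        rcases lt_or_ge (M t) 0 with hMt | hMt
        · have hev : ∀ᶠ z in 𝓝[>] t, M z < 0 :=
            eventually_nhdsWithin_of_eventually_nhds
              (hMc.continuousAt.eventually_lt continuousAt_const hMt)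
          filter_upwards [hev, eventually_mem_nhdsWithin] with z hz1 hz2
          have h1 : f z = 0 := max_eq_right hz1.le
          have h2 : f t = 0 := max_eq_right hMt.le
          rw [h1, h2, sub_zero]
          exact mul_pos hr0 (sub_pos.2 hz2)
        · have hft : f t = M t := max_eq_left hMt
          have hall : ∀ j : ι, ∀ᶠ z in 𝓝[>] t, δ j z - M t < r * (z - t) := by
            intro j
            by_cases hj : δ j t = M t
            · have hmax : ∀ k, δ k t ≤ δ j t := fun k => (hMle k t).trans hj.ge
              have h0 : 0 ≤ δ j t := hj.symm ▸ hMt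
              have hlt : K * δ j t < r := by rw [hj, ← hft]; exact hr
              filter_upwards [hder t ht j hmax h0 r hlt] with z hz
              rw [← hj]; exact hz
            · have hjlt : δ j t < M t := lt_of_le_of_ne (hMle j t) hj
              have hev : ∀ᶠ z in 𝓝[>] t, δ j z < M t :=
                eventually_nhdsWithin_of_eventually_nhds
                  ((hcont j).continuousAt.eventually_lt continuousAt_const hjlt)
              filter_upwards [hev, eventually_mem_nhdsWithin] with z hz1 hz2
              have h2 : (0:ℝ) < r * (z - t) := mul_pos hr0 (sub_pos.2 hz2)
              linarith
          filter_upwards [eventually_all.2 hall, eventually_mem_nhdsWithin] with z hz1 hz2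
          have hzt : (0:ℝ) < z - t := sub_pos.2 hz2
          have hMz : M z - M t < r * (z - t) := by
            obtain ⟨j, hj⟩ := hMex z
            rw [hj]; exact hz1 j
          have h0 : (0:ℝ) - f t ≤ 0 := by
            have := hfge t; linarith
          rw [hft]
          rcases max_cases (M z) 0 with ⟨h1, -⟩ | ⟨h1, -⟩
          · show max (M z) 0 - M t < r * (z - t)
            rw [h1]; exact hMz
          · show max (M z) 0 - M t < r * (z - t)
            rw [h1]
            have : (0:ℝ) < r * (z - t) := mul_pos hr0 hzt
            linarith
      refine (hkey.and eventually_mem_nhdsWithin).frequently.mono ?_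
      rintro z ⟨hz1, hz2⟩
      have hzt : (0:ℝ) < z - t := sub_pos.2 hz2
      rw [inv_mul_lt_iff₀ hzt]
      linarith [hz1]
    · exact le_refl _
    · intro t _
      rw [add_zero]
  intro t ht i
  have h1 : δ i t ≤ f t := (hMle i t).trans (le_max_left _ _)
  have h2 := key t ht
  rw [gronwallBound_ε0] at h2
  exact h1.trans h2

lemma slope_eventually_lt {ψ : ℝ → ℝ} {t v r : ℝ} (hψ : HasDerivAt ψ v t) (hvr : v < r) :
    ∀ᶠ z in 𝓝[>] t, ψ z - ψ t < r * (z - t) := by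
  have h1 : Tendsto (slope ψ t) (𝓝[≠] t) (𝓝 v) := hasDerivAt_iff_tendsto_slope.1 hψ
  have h2 : ∀ᶠ z in 𝓝[≠] t, slope ψ t z < r := h1.eventually (eventually_lt_nhds hvr)
  have h3 : 𝓝[>] t ≤ 𝓝[≠] t := nhdsWithin_mono t fun z hz => ne_of_gt hz
  filter_upwards [h2.filter_mono h3, eventually_mem_nhdsWithin] with z hz1 hz2
  have hzt : (0:ℝ) < z - t := sub_pos.2 hz2
  have : slope ψ t z = (z - t)⁻¹ * (ψ z - ψ t) := by
    rw [slope_def_field, div_eq_inv_mul]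
  rw [this, inv_mul_lt_iff₀ hzt] at hz1
  linarith

lemma normSlopeBound {u : ℝ → ℂ} {t : ℝ} {b : ℂ} (hu : HasDerivAt u b t) {q r : ℝ}
    (hq1 : (u t).re * b.re + (u t).im * b.im ≤ q * ‖u t‖)
    (hq0 : u t = 0 → ‖b‖ ≤ q) (hr : q < r) :
    ∀ᶠ z in 𝓝[>] t, ‖u z‖ - ‖u t‖ < r * (z - t) := by
  by_cases ha : u t = 0
  · -- slope of norm bounded by ‖b‖
    have h1 : Tendsto (slope u t) (𝓝[≠] t) (𝓝 b) := hasDerivAt_iff_tendsto_slope.1 hu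
    have h2 : Tendsto (fun z => ‖slope u t z‖) (𝓝[≠] t) (𝓝 ‖b‖) := h1.norm
    have hbr : ‖b‖ < r := lt_of_le_of_lt (hq0 ha) hr
    have h3 : ∀ᶠ z in 𝓝[≠] t, ‖slope u t z‖ < r := h2.eventually (eventually_lt_nhds hbr)
    have h4 : 𝓝[>] t ≤ 𝓝[≠] t := nhdsWithin_mono t fun z hz => ne_of_gt hz
    filter_upwards [h3.filter_mono h4, eventually_mem_nhdsWithin] with z hz1 hz2
    have hzt : (0:ℝ) < z - t := sub_pos.2 hz2
    have h5 : ‖u z‖ - ‖u t‖ ≤ ‖u z - u t‖ := by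
      have := norm_sub_norm_le (u z) (u t); linarith
    have h6 : ‖slope u t z‖ = (z - t)⁻¹ * ‖u z - u t‖ := by
      rw [slope, norm_smul, Real.norm_eq_abs, abs_inv, abs_of_pos hzt, vsub_eq_sub]
    rw [h6, inv_mul_lt_iff₀ hzt] at hz1
    linarith
  · -- differentiable case
    set N : ℝ → ℝ := fun z => (u z).re * (u z).re + (u z).im * (u z).im with hN
    have hure : HasDerivAt (fun z => (u z).re) b.re t := by
      exact (Complex.reCLM.hasFDerivAt.comp_hasDerivAt t hu)
    have huim : HasDerivAt (fun z => (u z).im) b.im t := by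
      exact (Complex.imCLM.hasFDerivAt.comp_hasDerivAt t hu)
    have hNd : HasDerivAt N (2 * ((u t).re * b.re + (u t).im * b.im)) t := by
      have := (hure.mul hure).add (huim.mul huim)
      exact this.congr_deriv (by ring)
    have hNnorm : ∀ z, ‖u z‖ = Real.sqrt (N z) := by
      intro z
      rw [hN]
      rw [Complex.norm_def, Complex.normSq_apply]
    have hNt : N t ≠ 0 := by
      intro h
      apply ha
      have : ‖u t‖ = 0 := by rw [hNnorm t, h, Real.sqrt_zero]
      exact norm_eq_zero.1 this
    have hsq : HasDerivAt (fun z => Real.sqrt (N z))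
        (1 / (2 * Real.sqrt (N t)) * (2 * ((u t).re * b.re + (u t).im * b.im))) t :=
      (Real.hasDerivAt_sqrt hNt).comp t hNd
    have hnormpos : 0 < ‖u t‖ := norm_pos_iff.2 ha
    have hv : 1 / (2 * Real.sqrt (N t)) * (2 * ((u t).re * b.re + (u t).im * b.im)) ≤ q := by
      rw [← hNnorm t]
      rw [div_mul_eq_mul_div, one_mul]
      rw [div_le_iff₀ (by positivity)]
      calc 2 * ((u t).re * b.re + (u t).im * b.im) ≤ 2 * (q * ‖u t‖) := by linarith
        _ = q * (2 * ‖u t‖) := by ring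
    have := slope_eventually_lt hsq (lt_of_le_of_lt hv hr)
    filter_upwards [this] with z hz
    rw [hNnorm z, hNnorm t]
    exact hz
-- Section D : rayBound
lemma rayBound {ι : Type*} [Fintype ι] [Nonempty ι] (δ : ι → ℝ → ℝ) (K : ℝ) (hK : 0 ≤ K)
    (hcont : ∀ i, Continuous (δ i)) (h0 : ∀ i, δ i 0 ≤ 0)
    (hder : ∀ t, 0 < t → t < 1 → ∀ i, (∀ j, δ j t ≤ δ i t) → 0 ≤ δ i t →
      ∀ r, K * δ i t < r → ∀ᶠ z in 𝓝[>] t, δ i z - δ i t < r * (z - t)) :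
    ∀ i, ∀ t, 0 < t → t ≤ 1 → δ i t ≤ 0 := by
  intro i t ht0 ht1
  have key : ∀ t₀ ∈ Set.Ioc (0:ℝ) t,
      δ i t ≤ (max (Finset.univ.sup' Finset.univ_nonempty (fun j => δ j t₀)) 0) * Real.exp K := by
    intro t₀ ht₀
    have hmp := maxPrinciple δ t₀ t K hK hcont (fun s hs j => hder s (lt_of_lt_of_le ht₀.1 hs.1)
      (lt_of_lt_of_le hs.2 ht1) j) t ⟨ht₀.2, le_refl t⟩ i
    refine hmp.trans ?_
    apply mul_le_mul_of_nonneg_left _ (le_max_right _ 0)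
    apply Real.exp_le_exp.2
    nlinarith [ht₀.1, ht₀.2]
  set g : ℝ → ℝ := fun s =>
    (max (Finset.univ.sup' Finset.univ_nonempty (fun j => δ j s)) 0) * Real.exp K with hg
  have hgc : Continuous g := by
    apply Continuous.mul _ continuous_const
    apply Continuous.max _ continuous_const
    apply continuous_iff_continuousAt.2
    intro s
    exact ContinuousAt.finset_sup'_apply Finset.univ_nonempty (fun j _ => (hcont j).continuousAt)
  have hg0 : g 0 = 0 := by
    have h1 : Finset.univ.sup' Finset.univ_nonempty (fun j => δ j 0) ≤ 0 :=
      Finset.sup'_le _ _ (fun j _ => h0 j)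
    rw [hg]
    simp only [max_eq_right h1, zero_mul]
  have htend : Filter.Tendsto g (𝓝[>] (0:ℝ)) (𝓝 0) := by
    have h5 := hgc.tendsto 0
    rw [hg0] at h5
    exact h5.mono_left nhdsWithin_le_nhds
  refine ge_of_tendsto htend ?_
  filter_upwards [Ioc_mem_nhdsGT_of_mem (Set.mem_Ico.2 ⟨le_refl (0:ℝ), ht0⟩)] with t₀ ht₀
  exact key t₀ ht₀
-- Section E : core setup
section Core
variable {E : Type*} [NormedAddCommGroup E] [InnerProductSpace ℝ E] [FiniteDimensional ℝ E]
variable (D : HOData E) [Fintype (weylGroup D)]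

/-- Reflection by a root as a left-multiplication on the Weyl group (junk value if not a root). -/
noncomputable def sigmaW (α : E) : weylGroup D → weylGroup D := fun w =>
  if h : α ∈ D.R then ⟨rIso α (D.root_ne_zero α h), rIso_mem D h⟩ * w else w

lemma sigmaW_apply {α : E} (h : α ∈ D.R) (w : weylGroup D) (y : E) :
    (sigmaW D α w).1 y = rRefl α (w.1 y) := by
  rw [sigmaW, dif_pos h]
  rfl

lemma inner_path (w : weylGroup D) (x : E) (t : ℝ) (α : E) :
    ⟪α, w.1 (t • x)⟫ = t * ⟪α, w.1 x⟫ := by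
  rw [map_smul, real_inner_smul_right]

lemma inner_root_w_ne {x : E} (hx : HORegular D x) (w : weylGroup D) {α : E}
    (hα : α ∈ D.R) : ⟪α, w.1 x⟫ ≠ 0 := by
  rw [inner_weyl]
  have h1 : (w.1)⁻¹ ∈ weylGroup D := inv_mem w.2
  have h2 := weyl_root_mem D h1 hα
  rw [LinearIsometryEquiv.coe_inv] at h2
  exact hx _ h2

lemma coef_pos {k s t : ℝ} (hk : 0 < k) (hs : s ≠ 0) (ht : 0 < t) :
    0 < k * s / (1 - Real.exp (-(t * s))) := by
  rcases lt_or_gt_of_ne hs with h | h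
  · apply div_pos_of_neg_of_neg (mul_neg_of_pos_of_neg hk h)
    have h1 : (1:ℝ) < Real.exp (-(t * s)) := by
      rw [show (1:ℝ) = Real.exp 0 by rw [Real.exp_zero]]
      apply Real.exp_lt_exp.2
      nlinarith
    linarith
  · apply div_pos (mul_pos hk h)
    have h1 : Real.exp (-(t * s)) < 1 := by
      rw [show (1:ℝ) = Real.exp 0 by rw [Real.exp_zero]]
      apply Real.exp_lt_exp.2
      nlinarith
    linarith

lemma path_cont {F : Type*} [NormedAddCommGroup F] [NormedSpace ℝ F] {G : E → F}
    (hG : AnalyticOnNhd ℝ G Set.univ) (w : weylGroup D) (x : E) :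
    Continuous (fun t : ℝ => G (w.1 (t • x))) := by
  have hGc : Continuous G := continuous_iff_continuousAt.2 fun y =>
    (hG y (Set.mem_univ y)).continuousAt
  exact hGc.comp ((w.1.continuous).comp (continuous_id.smul continuous_const))

lemma path_zero {F : Type*} [AddCommGroup F] (G : E → F) (w : weylGroup D) (x : E) :
    G (w.1 ((0:ℝ) • x)) = G 0 := by
  rw [zero_smul, map_zero]

lemma hasDerivAt_path {F : Type*} [NormedAddCommGroup F] [NormedSpace ℝ F] {G : E → F}
    (hG : AnalyticOnNhd ℝ G Set.univ) (w : weylGroup D) (x : E) (t : ℝ) :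
    HasDerivAt (fun s : ℝ => G (w.1 (s • x))) (fderiv ℝ G (w.1 (t • x)) (w.1 x)) t := by
  have h1 : HasDerivAt (fun s : ℝ => s • x) x t := by
    simpa using (hasDerivAt_id t).smul_const x
  have h2 : HasDerivAt (fun s : ℝ => w.1 (s • x)) (w.1 x) t := by
    have h3 := (w.1.toLinearIsometry.toContinuousLinearMap.hasFDerivAt
      (x := t • x)).comp_hasDerivAt t h1
    exact h3
  exact ((hG _ (Set.mem_univ _)).differentiableAt.hasFDerivAt).comp_hasDerivAt t h2

lemma opdam_deriv_R {lam : E} {G : E → ℝ} (hG : IsOpdamR D lam G) {x : E}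
    (hx : HORegular D x) (w : weylGroup D) {t : ℝ} (ht : 0 < t) :
    HasDerivAt (fun s : ℝ => G (w.1 (s • x)))
      ((∑ α ∈ D.Rpos, D.k α * ⟪α, w.1 x⟫ / (1 - Real.exp (-(t * ⟪α, w.1 x⟫))) *
          (G ((sigmaW D α w).1 (t • x)) - G (w.1 (t • x))))
        + ⟪rhoHO D + lam, w.1 x⟫ * G (w.1 (t • x))) t := by
  have hreg : HORegular D (w.1 (t • x)) := weyl_regular D w.2 hx (ne_of_gt ht)
  have hd := hasDerivAt_path D hG.1 w x t
  rw [hG.2.2 (w.1 x) (w.1 (t • x)) hreg] at hd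
  have hsum : ∀ α ∈ D.Rpos,
      D.k α * ⟪α, w.1 x⟫ / (1 - Real.exp (-⟪α, w.1 (t • x)⟫))
          * (G (rRefl α (w.1 (t • x))) - G (w.1 (t • x)))
        = D.k α * ⟪α, w.1 x⟫ / (1 - Real.exp (-(t * ⟪α, w.1 x⟫)))
          * (G ((sigmaW D α w).1 (t • x)) - G (w.1 (t • x))) := by
    intro α hα
    rw [sigmaW_apply D (D.pos_subset hα), inner_path]
  rw [Finset.sum_congr rfl hsum] at hd
  exact hd

lemma opdam_deriv_C {l1 l2 : E} {G : E → ℂ} (hG : IsOpdamC D l1 l2 G) {x : E}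
    (hx : HORegular D x) (w : weylGroup D) {t : ℝ} (ht : 0 < t) :
    HasDerivAt (fun s : ℝ => G (w.1 (s • x)))
      ((∑ α ∈ D.Rpos, ((D.k α * ⟪α, w.1 x⟫ / (1 - Real.exp (-(t * ⟪α, w.1 x⟫))) : ℝ) : ℂ) *
          (G ((sigmaW D α w).1 (t • x)) - G (w.1 (t • x))))
        + (((⟪rhoHO D + l1, w.1 x⟫ : ℝ) : ℂ) + Complex.I * ((⟪l2, w.1 x⟫ : ℝ) : ℂ))
            * G (w.1 (t • x))) t := by
  have hreg : HORegular D (w.1 (t • x)) := weyl_regular D w.2 hx (ne_of_gt ht)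
  have hd := hasDerivAt_path D hG.1 w x t
  rw [hG.2.2 (w.1 x) (w.1 (t • x)) hreg] at hd
  have hsum : ∀ α ∈ D.Rpos,
      ((D.k α * ⟪α, w.1 x⟫ / (1 - Real.exp (-⟪α, w.1 (t • x)⟫)) : ℝ) : ℂ)
          * (G (rRefl α (w.1 (t • x))) - G (w.1 (t • x)))
        = ((D.k α * ⟪α, w.1 x⟫ / (1 - Real.exp (-(t * ⟪α, w.1 x⟫))) : ℝ) : ℂ)
          * (G ((sigmaW D α w).1 (t • x)) - G (w.1 (t • x))) := by
    intro α hα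
    rw [sigmaW_apply D (D.pos_subset hα), inner_path]
  rw [Finset.sum_congr rfl hsum] at hd
  exact hd

end Core
-- Section F : positivity of real Opdam functions along rays
section CoreF
variable {E : Type*} [NormedAddCommGroup E] [InnerProductSpace ℝ E] [FiniteDimensional ℝ E]
variable (D : HOData E) [Fintype (weylGroup D)]

lemma opdamR_nonneg {lam : E} {G : E → ℝ} (hG : IsOpdamR D lam G) {x : E}
    (hx : HORegular D x) :
    ∀ (w : weylGroup D) (t : ℝ), 0 < t → t ≤ 1 → 0 ≤ G (w.1 (t • x)) := by
  haveI : Nonempty (weylGroup D) := ⟨1⟩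
  set K : ℝ := Finset.univ.sup' Finset.univ_nonempty
    (fun w : weylGroup D => |⟪rhoHO D + lam, w.1 x⟫|) with hKdef
  have hKd : ∀ w : weylGroup D, |⟪rhoHO D + lam, w.1 x⟫| ≤ K := by
    intro w
    rw [hKdef]
    exact Finset.le_sup' (fun v : weylGroup D => |⟪rhoHO D + lam, v.1 x⟫|) (Finset.mem_univ w)
  have hK0 : 0 ≤ K := le_trans (abs_nonneg _) (hKd 1)
  set δ : weylGroup D → ℝ → ℝ := fun w t => -G (w.1 (t • x)) with hδdef
  have hray : ∀ (w : weylGroup D) (t : ℝ), 0 < t → t ≤ 1 → δ w t ≤ 0 := by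
    apply rayBound δ K hK0
    · exact fun w => (path_cont D hG.1 w x).neg
    · intro w
      show -G (w.1 ((0:ℝ) • x)) ≤ 0
      rw [path_zero D G w x, hG.2.1]
      norm_num
    · intro t ht0 ht1 w hmax hpos r hr
      have hd := (opdam_deriv_R D hG hx w ht0).neg
      set c : E → ℝ := fun α =>
        D.k α * ⟪α, w.1 x⟫ / (1 - Real.exp (-(t * ⟪α, w.1 x⟫))) with hcdef
      have hcpos : ∀ α ∈ D.Rpos, 0 < c α := fun α hα =>
        coef_pos (D.k_pos α (D.pos_subset hα)) (inner_root_w_ne D hx w (D.pos_subset hα)) ht0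
      have hval : -((∑ α ∈ D.Rpos, c α * (G ((sigmaW D α w).1 (t • x)) - G (w.1 (t • x))))
            + ⟪rhoHO D + lam, w.1 x⟫ * G (w.1 (t • x)))
          = (∑ α ∈ D.Rpos, c α * (δ (sigmaW D α w) t - δ w t))
            + ⟪rhoHO D + lam, w.1 x⟫ * δ w t := by
        rw [neg_add, ← Finset.sum_neg_distrib]
        congr 1
        · apply Finset.sum_congr rfl
          intro α _
          show -(c α * (G ((sigmaW D α w).1 (t • x)) - G (w.1 (t • x))))
            = c α * (-G ((sigmaW D α w).1 (t • x)) - -G (w.1 (t • x)))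
          ring
        · show -(⟪rhoHO D + lam, w.1 x⟫ * G (w.1 (t • x)))
            = ⟪rhoHO D + lam, w.1 x⟫ * (-G (w.1 (t • x)))
          ring
      rw [hval] at hd
      have hb1 : (∑ α ∈ D.Rpos, c α * (δ (sigmaW D α w) t - δ w t)) ≤ 0 :=
        Finset.sum_nonpos fun α hα =>
          mul_nonpos_of_nonneg_of_nonpos (hcpos α hα).le (sub_nonpos.2 (hmax _))
      have hb2 : ⟪rhoHO D + lam, w.1 x⟫ * δ w t ≤ K * δ w t :=
        mul_le_mul_of_nonneg_right ((le_abs_self _).trans (hKd w)) hpos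
      exact slope_eventually_lt hd (by linarith)
  intro w t ht0 ht1
  have := hray w t ht0 ht1
  simp only [hδdef, neg_nonpos] at this
  exact this
end CoreF
-- Section G : comparison for part (2)
section CoreG
variable {E : Type*} [NormedAddCommGroup E] [InnerProductSpace ℝ E] [FiniteDimensional ℝ E]
variable (D : HOData E) [Fintype (weylGroup D)]

instance : Nonempty (weylGroup D) := ⟨1⟩

lemma opdamR_compare {lam : E} {G Gzero : E → ℝ} (hG : IsOpdamR D lam G)
    (h0 : IsOpdamR D 0 Gzero) {x : E} (hx : HORegular D x) (w : weylGroup D) :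
    G (w.1 x) ≤ Gzero (w.1 x) * Real.exp (Finset.univ.sup' Finset.univ_nonempty
      (fun v : weylGroup D => ⟪lam, v.1 x⟫)) := by
  set M : ℝ := Finset.univ.sup' Finset.univ_nonempty
    (fun v : weylGroup D => ⟪lam, v.1 x⟫) with hMdef
  have hMle : ∀ v : weylGroup D, ⟪lam, v.1 x⟫ ≤ M := by
    intro v
    rw [hMdef]
    exact Finset.le_sup' (fun v : weylGroup D => ⟪lam, v.1 x⟫) (Finset.mem_univ v)
  set K : ℝ := Finset.univ.sup' Finset.univ_nonempty
    (fun v : weylGroup D => |⟪rhoHO D + 0, v.1 x⟫ + M|) with hKdef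
  have hKd : ∀ v : weylGroup D, |⟪rhoHO D + 0, v.1 x⟫ + M| ≤ K := by
    intro v
    rw [hKdef]
    exact Finset.le_sup' (fun v : weylGroup D => |⟪rhoHO D + 0, v.1 x⟫ + M|) (Finset.mem_univ v)
  have hK0 : 0 ≤ K := le_trans (abs_nonneg _) (hKd 1)
  set δ : weylGroup D → ℝ → ℝ :=
    fun v t => G (v.1 (t • x)) - Gzero (v.1 (t • x)) * Real.exp (t * M) with hδdef
  have hray : ∀ (v : weylGroup D) (t : ℝ), 0 < t → t ≤ 1 → δ v t ≤ 0 := by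
    apply rayBound δ K hK0
    · intro v
      exact (path_cont D hG.1 v x).sub ((path_cont D h0.1 v x).mul
        ((Real.continuous_exp).comp (continuous_id.mul continuous_const)))
    · intro v
      show G (v.1 ((0:ℝ) • x)) - Gzero (v.1 ((0:ℝ) • x)) * Real.exp ((0:ℝ) * M) ≤ 0
      rw [path_zero D G v x, path_zero D Gzero v x, hG.2.1, h0.2.1, zero_mul, Real.exp_zero]
      norm_num
    · intro t ht0 ht1 v hmax hpos r hr
      set c : E → ℝ := fun α =>
        D.k α * ⟪α, v.1 x⟫ / (1 - Real.exp (-(t * ⟪α, v.1 x⟫))) with hcdef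
      have hcpos : ∀ α ∈ D.Rpos, 0 < c α := fun α hα =>
        coef_pos (D.k_pos α (D.pos_subset hα)) (inner_root_w_ne D hx v (D.pos_subset hα)) ht0
      have hdG := opdam_deriv_R D hG hx v ht0
      have hdZ := opdam_deriv_R D h0 hx v ht0
      have hexp : HasDerivAt (fun s : ℝ => Real.exp (s * M)) (Real.exp (t * M) * M) t :=
        by have := (Real.hasDerivAt_exp (t * M)).comp t (hasDerivAt_mul_const M); exact this
      have hd := hdG.sub (hdZ.mul hexp)
      set e : ℝ := Real.exp (t * M) with hedef
      have hS : (∑ α ∈ D.Rpos, c α * (G ((sigmaW D α v).1 (t • x)) - G (v.1 (t • x))))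
          - (∑ α ∈ D.Rpos, c α * (Gzero ((sigmaW D α v).1 (t • x)) - Gzero (v.1 (t • x)))) * e
          = ∑ α ∈ D.Rpos, c α * (δ (sigmaW D α v) t - δ v t) := by
        rw [Finset.sum_mul, ← Finset.sum_sub_distrib]
        apply Finset.sum_congr rfl
        intro α _
        show c α * (G ((sigmaW D α v).1 (t • x)) - G (v.1 (t • x)))
            - c α * (Gzero ((sigmaW D α v).1 (t • x)) - Gzero (v.1 (t • x))) * e
          = c α * ((G ((sigmaW D α v).1 (t • x)) - Gzero ((sigmaW D α v).1 (t • x)) * e)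
            - (G (v.1 (t • x)) - Gzero (v.1 (t • x)) * e))
        ring
      have hδv : δ v t = G (v.1 (t • x)) - Gzero (v.1 (t • x)) * e := rfl
      have hval : ((∑ α ∈ D.Rpos, c α * (G ((sigmaW D α v).1 (t • x)) - G (v.1 (t • x))))
            + ⟪rhoHO D + lam, v.1 x⟫ * G (v.1 (t • x)))
          - (((∑ α ∈ D.Rpos, c α * (Gzero ((sigmaW D α v).1 (t • x)) - Gzero (v.1 (t • x))))
              + ⟪rhoHO D + 0, v.1 x⟫ * Gzero (v.1 (t • x))) * e
             + Gzero (v.1 (t • x)) * (e * M))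
          = (∑ α ∈ D.Rpos, c α * (δ (sigmaW D α v) t - δ v t))
            + ((⟪rhoHO D + 0, v.1 x⟫ + M) * δ v t
               + (⟪rhoHO D + lam, v.1 x⟫ - ⟪rhoHO D + 0, v.1 x⟫ - M) * G (v.1 (t • x))) := by
        rw [hδv] at hS ⊢
        linear_combination hS
      rw [hval] at hd
      have hb1 : (∑ α ∈ D.Rpos, c α * (δ (sigmaW D α v) t - δ v t)) ≤ 0 :=
        Finset.sum_nonpos fun α hα =>
          mul_nonpos_of_nonneg_of_nonpos (hcpos α hα).le (sub_nonpos.2 (hmax _))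
      have hb2 : (⟪rhoHO D + 0, v.1 x⟫ + M) * δ v t ≤ K * δ v t :=
        mul_le_mul_of_nonneg_right ((le_abs_self _).trans (hKd v)) hpos
      have hb3 : (⟪rhoHO D + lam, v.1 x⟫ - ⟪rhoHO D + 0, v.1 x⟫ - M) * G (v.1 (t • x)) ≤ 0 := by
        apply mul_nonpos_of_nonpos_of_nonneg
        · have h1 : ⟪rhoHO D + lam, v.1 x⟫ = ⟪rhoHO D, v.1 x⟫ + ⟪lam, v.1 x⟫ :=
            inner_add_left _ _ _
          have h2 : ⟪rhoHO D + 0, v.1 x⟫ = ⟪rhoHO D, v.1 x⟫ + ⟪(0:E), v.1 x⟫ :=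
            inner_add_left _ _ _
          have h3 : ⟪(0:E), v.1 x⟫ = 0 := inner_zero_left _
          have h4 := hMle v
          linarith
        · exact opdamR_nonneg D hG hx v t ht0 ht1.le
      exact slope_eventually_lt hd (by linarith)
  have := hray w 1 one_pos (le_refl 1)
  rw [hδdef] at this
  simp only [one_smul, one_mul] at this
  linarith
end CoreG
-- Section H : helpers for complex estimates
lemma re_im_cs (a u : ℂ) : a.re * u.re + a.im * u.im ≤ ‖a‖ * ‖u‖ := by
  have h1 := Complex.re_le_norm ((starRingEnd ℂ) a * u)
  have h2 : ((starRingEnd ℂ) a * u).re = a.re * u.re + a.im * u.im := by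
    simp [Complex.mul_re]
  have h3 : ‖(starRingEnd ℂ) a * u‖ = ‖a‖ * ‖u‖ := by
    rw [norm_mul, Complex.norm_conj]
  rw [h2, h3] at h1
  exact h1

lemma re_im_self (a : ℂ) : a.re * a.re + a.im * a.im = ‖a‖ * ‖a‖ := by
  have h1 : Complex.normSq a = a.re * a.re + a.im * a.im := Complex.normSq_apply a
  have h2 : Complex.normSq a = ‖a‖ * ‖a‖ := by rw [Complex.normSq_eq_norm_sq, sq]
  rw [← h2, h1]

section CoreH
variable {E : Type*} [NormedAddCommGroup E] [InnerProductSpace ℝ E] [FiniteDimensional ℝ E]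
variable (D : HOData E) [Fintype (weylGroup D)]

lemma opdamC_compare {l1 l2 : E} {G : E → ℂ} {Gre : E → ℝ} (hG : IsOpdamC D l1 l2 G)
    (hre : IsOpdamR D l1 Gre) {x : E} (hx : HORegular D x) (w : weylGroup D) :
    ‖G (w.1 x)‖ ≤ Gre (w.1 x) := by
  set K : ℝ := Finset.univ.sup' Finset.univ_nonempty
    (fun j : weylGroup D => |⟪rhoHO D + l1, j.1 x⟫|) with hKdef
  have hKd : ∀ j : weylGroup D, |⟪rhoHO D + l1, j.1 x⟫| ≤ K := by
    intro j
    rw [hKdef]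
    exact Finset.le_sup' (fun j : weylGroup D => |⟪rhoHO D + l1, j.1 x⟫|) (Finset.mem_univ j)
  have hK0 : 0 ≤ K := le_trans (abs_nonneg _) (hKd 1)
  set δ : weylGroup D → ℝ → ℝ :=
    fun j t => ‖G (j.1 (t • x))‖ - Gre (j.1 (t • x)) with hδdef
  have hray : ∀ (j : weylGroup D) (t : ℝ), 0 < t → t ≤ 1 → δ j t ≤ 0 := by
    apply rayBound δ K hK0
    · intro j
      exact ((path_cont D hG.1 j x).norm).sub (path_cont D hre.1 j x)
    · intro j
      show ‖G (j.1 ((0:ℝ) • x))‖ - Gre (j.1 ((0:ℝ) • x)) ≤ 0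
      rw [path_zero D G j x, path_zero D Gre j x, hG.2.1, hre.2.1, norm_one]
      norm_num
    · intro t ht0 ht1 v hmax hpos r hr
      set c : E → ℝ := fun α =>
        D.k α * ⟪α, v.1 x⟫ / (1 - Real.exp (-(t * ⟪α, v.1 x⟫))) with hcdef
      have hcpos : ∀ α ∈ D.Rpos, 0 < c α := fun α hα =>
        coef_pos (D.k_pos α (D.pos_subset hα)) (inner_root_w_ne D hx v (D.pos_subset hα)) ht0
      have hdu := opdam_deriv_C D hG hx v ht0
      have hdU := opdam_deriv_R D hre hx v ht0
      set a : ℂ := G (v.1 (t • x)) with hadef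
      set d : ℝ := ⟪rhoHO D + l1, v.1 x⟫ with hddef
      set Λ : ℝ := ⟪l2, v.1 x⟫ with hΛdef
      set q : ℝ := (∑ α ∈ D.Rpos, c α * (‖G ((sigmaW D α v).1 (t • x))‖ - ‖a‖)) + d * ‖a‖
        with hqdef
      set B : ℝ := (∑ α ∈ D.Rpos, c α * (Gre ((sigmaW D α v).1 (t • x)) - Gre (v.1 (t • x))))
        + d * Gre (v.1 (t • x)) with hBdef
      set b : ℂ := (∑ α ∈ D.Rpos, ((c α : ℝ) : ℂ) * (G ((sigmaW D α v).1 (t • x)) - a))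
        + (((d : ℝ) : ℂ) + Complex.I * ((Λ : ℝ) : ℂ)) * a with hbdef
      -- re/im computations
      have hS_re : (∑ α ∈ D.Rpos, ((c α : ℝ) : ℂ) * (G ((sigmaW D α v).1 (t • x)) - a)).re
          = ∑ α ∈ D.Rpos, c α * ((G ((sigmaW D α v).1 (t • x))).re - a.re) := by
        rw [Complex.re_sum]
        apply Finset.sum_congr rfl
        intro α _
        simp [Complex.mul_re]
      have hS_im : (∑ α ∈ D.Rpos, ((c α : ℝ) : ℂ) * (G ((sigmaW D α v).1 (t • x)) - a)).im
          = ∑ α ∈ D.Rpos, c α * ((G ((sigmaW D α v).1 (t • x))).im - a.im) := by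
        rw [Complex.im_sum]
        apply Finset.sum_congr rfl
        intro α _
        simp [Complex.mul_im]
      have hT_re : ((((d : ℝ) : ℂ) + Complex.I * ((Λ : ℝ) : ℂ)) * a).re
          = d * a.re - Λ * a.im := by
        simp [Complex.mul_re, Complex.add_re, Complex.add_im]
      have hT_im : ((((d : ℝ) : ℂ) + Complex.I * ((Λ : ℝ) : ℂ)) * a).im
          = d * a.im + Λ * a.re := by
        simp [Complex.mul_im, Complex.add_re, Complex.add_im]
      have hsum2 : a.re * (∑ α ∈ D.Rpos, c α * ((G ((sigmaW D α v).1 (t • x))).re - a.re))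
            + a.im * (∑ α ∈ D.Rpos, c α * ((G ((sigmaW D α v).1 (t • x))).im - a.im))
          = ∑ α ∈ D.Rpos, c α * ((a.re * (G ((sigmaW D α v).1 (t • x))).re
              + a.im * (G ((sigmaW D α v).1 (t • x))).im) - (a.re * a.re + a.im * a.im)) := by
        rw [Finset.mul_sum, Finset.mul_sum, ← Finset.sum_add_distrib]
        exact Finset.sum_congr rfl (fun α _ => by ring)
      have hmain : a.re * b.re + a.im * b.im
          = (∑ α ∈ D.Rpos, c α * ((a.re * (G ((sigmaW D α v).1 (t • x))).re
              + a.im * (G ((sigmaW D α v).1 (t • x))).im) - (a.re * a.re + a.im * a.im)))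
            + d * (a.re * a.re + a.im * a.im) := by
        rw [hbdef, Complex.add_re, Complex.add_im, hS_re, hS_im, hT_re, hT_im]
        linear_combination hsum2
      have hq1 : a.re * b.re + a.im * b.im ≤ q * ‖a‖ := by
        rw [hmain, hqdef]
        have hstep : (∑ α ∈ D.Rpos, c α * ((a.re * (G ((sigmaW D α v).1 (t • x))).re
              + a.im * (G ((sigmaW D α v).1 (t • x))).im) - (a.re * a.re + a.im * a.im)))
            ≤ ∑ α ∈ D.Rpos, c α * (‖a‖ * ‖G ((sigmaW D α v).1 (t • x))‖ - ‖a‖ * ‖a‖) := by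
          apply Finset.sum_le_sum
          intro α hα
          apply mul_le_mul_of_nonneg_left _ (hcpos α hα).le
          have h1 := re_im_cs a (G ((sigmaW D α v).1 (t • x)))
          have h2 := re_im_self a
          linarith
        have hsc : d * (a.re * a.re + a.im * a.im) = (d * ‖a‖) * ‖a‖ := by
          rw [re_im_self]; ring
        have hfin : (∑ α ∈ D.Rpos, c α * (‖a‖ * ‖G ((sigmaW D α v).1 (t • x))‖ - ‖a‖ * ‖a‖))
              + (d * ‖a‖) * ‖a‖
            = ((∑ α ∈ D.Rpos, c α * (‖G ((sigmaW D α v).1 (t • x))‖ - ‖a‖)) + d * ‖a‖) * ‖a‖ := by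
          rw [add_mul, Finset.sum_mul]
          congr 1
          apply Finset.sum_congr rfl
          intro α _
          ring
        linarith
      have hq0 : a = 0 → ‖b‖ ≤ q := by
        intro ha
        rw [hbdef, ha]
        simp only [sub_zero, mul_zero, add_zero]
        refine le_trans (norm_sum_le _ _) ?_
        rw [hqdef, ha]
        simp only [norm_zero, sub_zero, mul_zero, add_zero]
        apply le_of_eq
        apply Finset.sum_congr rfl
        intro α hα
        rw [norm_mul, Complex.norm_real, Real.norm_eq_abs, abs_of_pos (hcpos α hα)]
      have hqB : q - B ≤ K * δ v t := by
        have hSd : (∑ α ∈ D.Rpos, c α * (‖G ((sigmaW D α v).1 (t • x))‖ - ‖a‖))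
              - (∑ α ∈ D.Rpos, c α * (Gre ((sigmaW D α v).1 (t • x)) - Gre (v.1 (t • x))))
            = ∑ α ∈ D.Rpos, c α * (δ (sigmaW D α v) t - δ v t) := by
          rw [← Finset.sum_sub_distrib]
          apply Finset.sum_congr rfl
          intro α _
          show c α * (‖G ((sigmaW D α v).1 (t • x))‖ - ‖a‖)
              - c α * (Gre ((sigmaW D α v).1 (t • x)) - Gre (v.1 (t • x)))
            = c α * ((‖G ((sigmaW D α v).1 (t • x))‖ - Gre ((sigmaW D α v).1 (t • x)))
              - (‖a‖ - Gre (v.1 (t • x))))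
          ring
        have hδv : δ v t = ‖a‖ - Gre (v.1 (t • x)) := rfl
        have h1 : q - B = (∑ α ∈ D.Rpos, c α * (δ (sigmaW D α v) t - δ v t)) + d * δ v t := by
          rw [hqdef, hBdef, hδv]
          linear_combination hSd
        have h2 : (∑ α ∈ D.Rpos, c α * (δ (sigmaW D α v) t - δ v t)) ≤ 0 :=
          Finset.sum_nonpos fun α hα =>
            mul_nonpos_of_nonneg_of_nonpos (hcpos α hα).le (sub_nonpos.2 (hmax _))
        have h3 : d * δ v t ≤ K * δ v t :=
          mul_le_mul_of_nonneg_right ((le_abs_self _).trans (hKd v)) hpos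
        linarith
      -- combine
      set r1 : ℝ := q + (r + B - q) / 2 with hr1def
      set r2 : ℝ := -B + (r + B - q) / 2 with hr2def
      have hgap : 0 < r + B - q := by
        have := hqB
        linarith
      have hq_r1 : q < r1 := by rw [hr1def]; linarith
      have hB_r2 : -B < r2 := by rw [hr2def]; linarith
      have hev1 := normSlopeBound hdu hq1 hq0 hq_r1
      have hev2 := slope_eventually_lt hdU.neg hB_r2
      have hr12 : r1 + r2 = r := by rw [hr1def, hr2def]; ring
      filter_upwards [hev1, hev2] with z h1 h2
      have hz : r1 * (z - t) + r2 * (z - t) = r * (z - t) := by rw [← hr12]; ring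
      show ‖G (v.1 (z • x))‖ - Gre (v.1 (z • x))
        - (‖G (v.1 (t • x))‖ - Gre (v.1 (t • x))) < r * (z - t)
      have h1' : ‖G (v.1 (z • x))‖ - ‖G (v.1 (t • x))‖ < r1 * (z - t) := h1
      have h2' : -Gre (v.1 (z • x)) - -Gre (v.1 (t • x)) < r2 * (z - t) := h2
      linarith
  have := hray w 1 one_pos (le_refl 1)
  rw [hδdef] at this
  simp only [one_smul] at this
  linarith
end CoreH
-- Section I : maxW and extension by continuity
section CoreI
variable {E : Type*} [NormedAddCommGroup E] [InnerProductSpace ℝ E] [FiniteDimensional ℝ E]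
variable (D : HOData E) [Fintype (weylGroup D)]

lemma maxW_eq (lam x : E) : maxW D lam x =
    Finset.univ.sup' Finset.univ_nonempty (fun v : weylGroup D => ⟪lam, v.1 x⟫) := by
  rw [maxW, ← Finset.sup'_univ_eq_ciSup]
  have key : ∀ w : weylGroup D, ⟪w.1 lam, x⟫ = ⟪lam, (w⁻¹).1 x⟫ := by
    intro w
    have h1 : ((w⁻¹ : weylGroup D) : E ≃ₗᵢ[ℝ] E) = (w.1)⁻¹ := rfl
    rw [h1, LinearIsometryEquiv.coe_inv]
    have h2 := inner_weyl (w.1.symm) lam x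
    rw [LinearIsometryEquiv.symm_symm] at h2
    exact h2.symm
  apply le_antisymm
  · apply Finset.sup'_le
    intro w _
    rw [key w]
    exact Finset.le_sup' (fun v : weylGroup D => ⟪lam, v.1 x⟫) (Finset.mem_univ w⁻¹)
  · apply Finset.sup'_le
    intro w _
    have h3 : ⟪lam, w.1 x⟫ = ⟪(w⁻¹).1 lam, x⟫ := by
      rw [key w⁻¹, inv_inv]
    rw [h3]
    exact Finset.le_sup' (fun v : weylGroup D => ⟪v.1 lam, x⟫) (Finset.mem_univ w⁻¹)

lemma extend_regular {f g : E → ℝ} (hf : Continuous f) (hg : Continuous g)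
    (h : ∀ x, HORegular D x → f x ≤ g x) (x : E) : f x ≤ g x := by
  obtain ⟨u, hu⟩ := D.pos_char
  have hureg : HORegular D u := by
    intro α hα
    rcases D.pos_or_neg α hα with h1 | h1
    · exact ne_of_gt ((hu α hα).1 h1)
    · have h2 := (hu (-α) (D.neg_mem α hα)).1 h1
      rw [inner_neg_left] at h2
      intro h3
      rw [h3] at h2
      norm_num at h2
  have hev : ∀ᶠ t in 𝓝[>] (0:ℝ), HORegular D (x + t • u) := by
    have hallα : ∀ α ∈ D.R, ∀ᶠ t in 𝓝[>] (0:ℝ), ⟪α, x + t • u⟫ ≠ 0 := by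
      intro α hα
      by_cases h0 : ⟪α, x⟫ = 0
      · filter_upwards [eventually_mem_nhdsWithin] with t ht
        rw [inner_add_right, real_inner_smul_right, h0, zero_add]
        exact mul_ne_zero (ne_of_gt ht) (hureg α hα)
      · have hc : Continuous (fun t : ℝ => ⟪α, x + t • u⟫) :=
          Continuous.inner continuous_const
            (continuous_const.add (continuous_id.smul continuous_const))
        have h2 := hc.tendsto 0
        rw [show x + (0:ℝ) • u = x by rw [zero_smul, add_zero]] at h2
        exact (h2.mono_left nhdsWithin_le_nhds).eventually_ne h0
    have h4 := (Filter.eventually_all_finset D.R).2 hallα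
    exact h4.mono (fun t ht => ht)
  have htend : Filter.Tendsto (fun t : ℝ => x + t • u) (𝓝[>] (0:ℝ)) (𝓝 x) := by
    have hc : Continuous (fun t : ℝ => x + t • u) :=
      continuous_const.add (continuous_id.smul continuous_const)
    have h2 := hc.tendsto 0
    rw [show x + (0:ℝ) • u = x by rw [zero_smul, add_zero]] at h2
    exact h2.mono_left nhdsWithin_le_nhds
  have h1 : Filter.Tendsto (fun t : ℝ => f (x + t • u)) (𝓝[>] (0:ℝ)) (𝓝 (f x)) :=
    (hf.tendsto x).comp htend
  have h2 : Filter.Tendsto (fun t : ℝ => g (x + t • u)) (𝓝[>] (0:ℝ)) (𝓝 (g x)) :=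
    (hg.tendsto x).comp htend
  exact le_of_tendsto_of_tendsto h1 h2 (hev.mono (fun t ht => h _ ht))

end CoreI

/-- (1) `|F_λ(x)| ≤ F_{Re λ}(x)` for all `λ ∈ h`, `x ∈ a`;
(2) `F_λ(x) ≤ F_0(x) · exp (max_{w ∈ W} (wλ, x))` for all `λ ∈ a`, `x ∈ a`. -/
theorem statement3 (D : HOData E) [Fintype (weylGroup D)] :
    (∀ (l1 l2 : E) (G : E → ℂ) (Gre : E → ℝ), IsOpdamC D l1 l2 G → IsOpdamR D l1 Gre →
      ∀ x : E, ‖FsymC D G x‖ ≤ Fsym D Gre x) ∧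
    (∀ (lam : E) (G Gzero : E → ℝ), IsOpdamR D lam G → IsOpdamR D 0 Gzero →
      ∀ x : E, Fsym D G x ≤ Fsym D Gzero x * Real.exp (maxW D lam x)) := by
  constructor
  · intro l1 l2 G Gre hG hre
    have hGc : Continuous G := continuous_iff_continuousAt.2 fun y =>
      (hG.1 y (Set.mem_univ y)).continuousAt
    have hrec : Continuous Gre := continuous_iff_continuousAt.2 fun y =>
      (hre.1 y (Set.mem_univ y)).continuousAt
    apply extend_regular D
    · exact continuous_norm.comp (continuous_const.mul
        (continuous_finset_sum _ (fun w _ => hGc.comp w.1.continuous)))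
    · exact continuous_const.mul (continuous_finset_sum _ (fun w _ => hrec.comp w.1.continuous))
    · intro x hx
      have hterm : ∀ w : weylGroup D, ‖G (w.1 x)‖ ≤ Gre (w.1 x) :=
        fun w => opdamC_compare D hG hre hx w
      show ‖FsymC D G x‖ ≤ Fsym D Gre x
      rw [FsymC, Fsym, norm_mul]
      have h1 : ‖((Fintype.card (weylGroup D) : ℂ)⁻¹)‖
          = (Fintype.card (weylGroup D) : ℝ)⁻¹ := by
        rw [norm_inv, Complex.norm_natCast]
      rw [h1]
      apply mul_le_mul_of_nonneg_left _ (inv_nonneg.2 (Nat.cast_nonneg _))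
      calc ‖∑ w : weylGroup D, G (w.1 x)‖
          ≤ ∑ w : weylGroup D, ‖G (w.1 x)‖ := norm_sum_le _ _
        _ ≤ ∑ w : weylGroup D, Gre (w.1 x) := Finset.sum_le_sum (fun w _ => by
            exact hterm w)
  · intro lam G Gzero hG h0
    have hGc : Continuous G := continuous_iff_continuousAt.2 fun y =>
      (hG.1 y (Set.mem_univ y)).continuousAt
    have hZc : Continuous Gzero := continuous_iff_continuousAt.2 fun y =>
      (h0.1 y (Set.mem_univ y)).continuousAt
    apply extend_regular D
    · exact continuous_const.mul (continuous_finset_sum _ (fun w _ => hGc.comp w.1.continuous))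
    · apply Continuous.mul
      · exact continuous_const.mul
          (continuous_finset_sum _ (fun w _ => hZc.comp w.1.continuous))
      · apply Real.continuous_exp.comp
        rw [show maxW D lam = fun y : E =>
            Finset.univ.sup' Finset.univ_nonempty (fun v : weylGroup D => ⟪lam, v.1 y⟫)
          from funext (fun y => maxW_eq D lam y)]
        apply continuous_iff_continuousAt.2
        intro y
        exact ContinuousAt.finset_sup'_apply Finset.univ_nonempty (fun v _ =>
          (Continuous.inner continuous_const v.1.continuous).continuousAt)
    · intro x hx
      have hterm := opdamR_compare D hG h0 hx
      rw [maxW_eq D lam x]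
      show (Fintype.card (weylGroup D) : ℝ)⁻¹ * ∑ w : weylGroup D, G (w.1 x)
        ≤ ((Fintype.card (weylGroup D) : ℝ)⁻¹ * ∑ w : weylGroup D, Gzero (w.1 x))
          * Real.exp (Finset.univ.sup' Finset.univ_nonempty
              (fun v : weylGroup D => ⟪lam, v.1 x⟫))
      calc (Fintype.card (weylGroup D) : ℝ)⁻¹ * ∑ w : weylGroup D, G (w.1 x)
          ≤ (Fintype.card (weylGroup D) : ℝ)⁻¹ * ∑ w : weylGroup D,
              (Gzero (w.1 x) * Real.exp (Finset.univ.sup' Finset.univ_nonempty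
                (fun v : weylGroup D => ⟪lam, v.1 x⟫))) :=
            mul_le_mul_of_nonneg_left (Finset.sum_le_sum (fun w _ => hterm w))
              (inv_nonneg.2 (Nat.cast_nonneg _))
        _ = ((Fintype.card (weylGroup D) : ℝ)⁻¹ * ∑ w : weylGroup D, Gzero (w.1 x))
            * Real.exp (Finset.univ.sup' Finset.univ_nonempty
                (fun v : weylGroup D => ⟪lam, v.1 x⟫)) := by
          rw [← Finset.sum_mul]
          ring
end
end

section
/- Let K′ = max_{α∈R₀⁺} (ρ, α∨). Then for every w ∈ W and every x in the closed positive Weyl chamber ā₊, (ρ, x) − (ρ, w x) ≤ K′ · l(w) · max_{α ∈ R₀⁺ ∩ wR⁻} |(α, w x)| (with the convention that the maximum over an empty set is 0). -/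
open scoped BigOperators RealInnerProductSpace Classical

set_option linter.unusedSectionVars false

noncomputable section

variable {E : Type*} [NormedAddCommGroup E] [InnerProductSpace ℝ E] [FiniteDimensional ℝ E]

section AuxLemmas

lemma inner_coroot_left (γ β : E) : ⟪coroot γ, β⟫ = (2 / ⟪γ, γ⟫) * ⟪γ, β⟫ := by
  simp [coroot, real_inner_smul_left]

lemma coroot_inner_self {γ : E} (hγ : γ ≠ 0) : ⟪coroot γ, γ⟫ = 2 := by
  rw [inner_coroot_left]
  have h : ⟪γ, γ⟫ ≠ 0 := fun h => hγ (inner_self_eq_zero.mp h)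
  field_simp

lemma rRefl_self {γ : E} (hγ : γ ≠ 0) : rRefl γ γ = -γ := by
  rw [rRefl, coroot_inner_self hγ]; module

lemma rRefl_smul_s11 (γ : E) (c : ℝ) (β : E) : rRefl γ (c • β) = c • rRefl γ β := by
  simp only [rRefl, real_inner_smul_right, smul_sub, smul_smul]

lemma inner_rRefl_coroot {γ : E} (hγ : γ ≠ 0) (α : E) :
    ⟪coroot γ, rRefl γ α⟫ = -⟪coroot γ, α⟫ := by
  rw [rRefl, inner_sub_right, real_inner_smul_right, coroot_inner_self hγ]
  ring

lemma rRefl_rRefl {γ : E} (hγ : γ ≠ 0) (α : E) : rRefl γ (rRefl γ α) = α := by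
  rw [rRefl, inner_rRefl_coroot hγ]
  rw [rRefl]; module

variable (D : HOData E)

lemma k_neg {β : E} (hβ : β ∈ D.R) : D.k (-β) = D.k β := by
  have h := D.k_inv β hβ β hβ
  rwa [rRefl_self (D.root_ne_zero β hβ)] at h

lemma weyl_act (g : E ≃ₗᵢ[ℝ] E) (hg : g ∈ weylGroup D) :
    ∀ β ∈ D.R, g β ∈ D.R ∧ D.k (g β) = D.k β := by
  induction hg using Subgroup.closure_induction with
  | mem g hgmem =>
    obtain ⟨α, hα, hgα⟩ := hgmem
    intro β hβ
    rw [hgα]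
    exact ⟨D.refl_mem α hα β hβ, D.k_inv α hα β hβ⟩
  | one => intro β hβ; constructor <;> simp [hβ]
  | mul a b ha hb iha ihb =>
    intro β hβ
    have h1 := ihb β hβ
    have h2 := iha (b β) h1.1
    refine ⟨?_, ?_⟩
    · simpa using h2.1
    · have : (a * b) β = a (b β) := rfl
      rw [this, h2.2, h1.2]
  | inv a ha iha =>
    intro β hβ
    have himg : D.R.image a = D.R := by
      apply Finset.eq_of_subset_of_card_le
      · intro y hy
        obtain ⟨z, hz, rfl⟩ := Finset.mem_image.mp hy
        exact (iha z hz).1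
      · rw [Finset.card_image_of_injective _ a.injective]
    rw [← himg] at hβ
    obtain ⟨z, hz, rfl⟩ := Finset.mem_image.mp hβ
    have hzz : (a⁻¹ : E ≃ₗᵢ[ℝ] E) (a z) = z := a.symm_apply_apply z
    rw [hzz]
    exact ⟨hz, ((iha z hz).2).symm⟩

lemma inner_u_pos {u : E} (hu : ∀ α ∈ D.R, (α ∈ D.Rpos ↔ 0 < ⟪α, u⟫))
    {β : E} (hβ : β ∈ D.Rpos) : 0 < ⟪β, u⟫ :=
  (hu β (D.pos_subset hβ)).mp hβ

lemma not_pos_neg {u : E} (hu : ∀ α ∈ D.R, (α ∈ D.Rpos ↔ 0 < ⟪α, u⟫))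
    {β : E} (hβ : β ∈ D.Rpos) : -β ∉ D.Rpos := by
  intro h
  have h1 := inner_u_pos D hu hβ
  have h2 := inner_u_pos D hu h
  rw [inner_neg_left] at h2
  linarith

lemma neg_pos_of_not_pos {β : E} (hβ : β ∈ D.R) (h : β ∉ D.Rpos) : -β ∈ D.Rpos :=
  (D.pos_or_neg β hβ).resolve_left h

lemma rho_inner (y : E) :
    ⟪rhoHO D, y⟫ = (2:ℝ)⁻¹ * ∑ α ∈ D.Rpos, D.k α * ⟪α, y⟫ := by
  rw [rhoHO, real_inner_smul_left, sum_inner]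
  congr 1
  exact Finset.sum_congr rfl (fun α _ => real_inner_smul_left _ _ _)

lemma keyA {u : E} (hu : ∀ α ∈ D.R, (α ∈ D.Rpos ↔ 0 < ⟪α, u⟫))
    {γ : E} (hγp : γ ∈ D.Rpos) :
    D.k γ + (if (2:ℝ) • γ ∈ D.R then 2 * D.k ((2:ℝ) • γ) else 0)
      ≤ ⟪rhoHO D, coroot γ⟫ := by
  have hγR : γ ∈ D.R := D.pos_subset hγp
  have hγ0 : γ ≠ 0 := D.root_ne_zero γ hγR
  have hexp := rho_inner D (coroot γ)
  set f : E → ℝ := fun α => D.k α * ⟪α, coroot γ⟫ with hf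
  have hsplit := Finset.sum_filter_add_sum_filter_not D.Rpos
    (fun α => rRefl γ α ∈ D.Rpos) f
  -- the reflected-positive part sums to zero
  have hflip : ∀ α : E, ⟪rRefl γ α, coroot γ⟫ = -⟪α, coroot γ⟫ := by
    intro α
    rw [real_inner_comm, inner_rRefl_coroot hγ0, real_inner_comm]
  have hcancel : ∀ a ∈ D.Rpos.filter (fun α => rRefl γ α ∈ D.Rpos),
      f a + f (rRefl γ a) = 0 := by
    intro a ha
    have haR : a ∈ D.Rpos := (Finset.mem_filter.mp ha).1
    have : D.k (rRefl γ a) = D.k a := D.k_inv γ hγR a (D.pos_subset haR)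
    rw [hf]
    simp only [this, hflip a]
    ring
  have hzero : ∑ a ∈ D.Rpos.filter (fun α => rRefl γ α ∈ D.Rpos), f a = 0 := by
    refine Finset.sum_involution (fun a _ => rRefl γ a) hcancel ?_ ?_ ?_
    · intro a ha hfa heq
      have := hcancel a ha
      change rRefl γ a = a at heq
      rw [heq] at this
      exact hfa (by linarith)
    · intro a ha
      have ha' := Finset.mem_filter.mp ha
      refine Finset.mem_filter.mpr ⟨ha'.2, ?_⟩
      rw [rRefl_rRefl hγ0]
      exact ha'.1
    · intro a _; exact rRefl_rRefl hγ0 a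
  -- the remaining part has nonnegative terms
  have hnonneg : ∀ a ∈ D.Rpos.filter (fun α => rRefl γ α ∉ D.Rpos), 0 ≤ f a := by
    intro a ha
    have ha' := Finset.mem_filter.mp ha
    have haR : a ∈ D.R := D.pos_subset ha'.1
    have hra : rRefl γ a ∈ D.R := D.refl_mem γ hγR a haR
    have h1 : ¬ (0 < ⟪rRefl γ a, u⟫) := fun h => ha'.2 ((hu _ hra).mpr h)
    have h2 : 0 < ⟪a, u⟫ := inner_u_pos D hu ha'.1
    have h3 : 0 < ⟪γ, u⟫ := inner_u_pos D hu hγp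
    have h4 : ⟪rRefl γ a, u⟫ = ⟪a, u⟫ - ⟪coroot γ, a⟫ * ⟪γ, u⟫ := by
      rw [rRefl, inner_sub_left, real_inner_smul_left]
    have h5 : 0 < ⟪coroot γ, a⟫ := by
      push_neg at h1
      rw [h4] at h1
      by_contra h6
      push_neg at h6
      nlinarith
    have h6 : 0 ≤ ⟪a, coroot γ⟫ := by rw [real_inner_comm]; linarith
    exact mul_nonneg (le_of_lt (D.k_pos a haR)) h6
  -- γ (and 2γ if a root) lie in the remaining part
  have hγmem : γ ∈ D.Rpos.filter (fun α => rRefl γ α ∉ D.Rpos) := by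
    refine Finset.mem_filter.mpr ⟨hγp, ?_⟩
    rw [rRefl_self hγ0]
    exact not_pos_neg D hu hγp
  have hlow : (2:ℝ) * D.k γ + (if (2:ℝ) • γ ∈ D.R then 4 * D.k ((2:ℝ) • γ) else 0)
      ≤ ∑ a ∈ D.Rpos.filter (fun α => rRefl γ α ∉ D.Rpos), f a := by
    by_cases h2γ : (2:ℝ) • γ ∈ D.R
    · have h2γp : (2:ℝ) • γ ∈ D.Rpos := by
        refine (hu _ h2γ).mpr ?_
        rw [real_inner_smul_left]
        have := inner_u_pos D hu hγp
        linarith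
      have h2γmem : (2:ℝ) • γ ∈ D.Rpos.filter (fun α => rRefl γ α ∉ D.Rpos) := by
        refine Finset.mem_filter.mpr ⟨h2γp, ?_⟩
        rw [rRefl_smul_s11, rRefl_self hγ0, smul_neg]
        exact not_pos_neg D hu h2γp
      have hne : γ ≠ (2:ℝ) • γ := by
        intro h
        apply hγ0
        have : (2:ℝ) • γ - γ = 0 := by rw [← h]; simp
        have h2 : γ = 0 := by
          rw [two_smul] at this
          simpa [add_sub_cancel_right] using this
        exact h2
      have hsub : {γ, (2:ℝ) • γ} ⊆ D.Rpos.filter (fun α => rRefl γ α ∉ D.Rpos) := by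
        intro z hz
        rcases Finset.mem_insert.mp hz with rfl | hz
        · exact hγmem
        · rw [Finset.mem_singleton.mp hz]; exact h2γmem
      have hpair : ∑ a ∈ ({γ, (2:ℝ) • γ} : Finset E), f a = f γ + f ((2:ℝ) • γ) :=
        Finset.sum_pair hne
      have hfγ : f γ = 2 * D.k γ := by
        rw [hf]; simp only []
        rw [real_inner_comm, coroot_inner_self hγ0]; ring
      have hf2γ : f ((2:ℝ) • γ) = 4 * D.k ((2:ℝ) • γ) := by
        rw [hf]; simp only []
        rw [real_inner_smul_left, real_inner_comm, coroot_inner_self hγ0]; ring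
      have := Finset.sum_le_sum_of_subset_of_nonneg hsub
        (fun i hi _ => hnonneg i hi)
      rw [hpair, hfγ, hf2γ] at this
      simpa [h2γ] using this
    · have hsub : {γ} ⊆ D.Rpos.filter (fun α => rRefl γ α ∉ D.Rpos) := by
        intro z hz
        rw [Finset.mem_singleton.mp hz]; exact hγmem
      have := Finset.sum_le_sum_of_subset_of_nonneg hsub
        (fun i hi _ => hnonneg i hi)
      rw [Finset.sum_singleton] at this
      have hfγ : f γ = 2 * D.k γ := by
        rw [hf]; simp only []
        rw [real_inner_comm, coroot_inner_self hγ0]; ring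
      rw [hfγ] at this
      simpa [h2γ] using this
  rw [hexp, ← hsplit, hzero]
  by_cases h2γ : (2:ℝ) • γ ∈ D.R <;> simp only [h2γ, if_true, if_false] at hlow ⊢ <;> linarith

lemma rho_sub (w : E ≃ₗᵢ[ℝ] E)
    (hWf : ∀ β ∈ D.R, w β ∈ D.R ∧ D.k (w β) = D.k β)
    (hWs : ∀ β ∈ D.R, w.symm β ∈ D.R ∧ D.k (w.symm β) = D.k β)
    {u : E} (hu : ∀ α ∈ D.R, (α ∈ D.Rpos ↔ 0 < ⟪α, u⟫)) :
    rhoHO D - w.symm (rhoHO D)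
      = ∑ β ∈ D.Rpos.filter (fun β => w β ∉ D.Rpos), D.k β • β := by
  have hsymm : w.symm (rhoHO D) = (2:ℝ)⁻¹ • ∑ α ∈ D.Rpos, D.k α • w.symm α := by
    rw [rhoHO, map_smul, map_sum]
    congr 1
    exact Finset.sum_congr rfl (fun α _ => by rw [map_smul])
  have hstep : ∑ α ∈ D.Rpos, D.k α • w.symm α
      = ∑ β ∈ D.Rpos, D.k β • (if w β ∈ D.Rpos then β else -β) := by
    refine Finset.sum_bij'
      (fun α _ => if w.symm α ∈ D.Rpos then w.symm α else -(w.symm α))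
      (fun β _ => if w β ∈ D.Rpos then w β else -(w β)) ?_ ?_ ?_ ?_ ?_
    · intro α hα
      by_cases h : w.symm α ∈ D.Rpos
      · simpa [h] using h
      · simp only [h, if_false]
        exact neg_pos_of_not_pos D (hWs α (D.pos_subset hα)).1 h
    · intro β hβ
      by_cases h : w β ∈ D.Rpos
      · simpa [h] using h
      · simp only [h, if_false]
        exact neg_pos_of_not_pos D (hWf β (D.pos_subset hβ)).1 h
    · intro α hα
      by_cases h : w.symm α ∈ D.Rpos
      · have happ : w (w.symm α) = α := w.apply_symm_apply α
        simp only [h, if_true, happ, hα, if_true]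
      · have h2 : -(w.symm α) ∈ D.Rpos :=
          neg_pos_of_not_pos D (hWs α (D.pos_subset hα)).1 h
        have happ : w (-(w.symm α)) = -α := by rw [map_neg, w.apply_symm_apply]
        have h3 : -α ∉ D.Rpos := not_pos_neg D hu hα
        simp only [h, if_false, happ, h3, if_false, neg_neg]
    · intro β hβ
      by_cases h : w β ∈ D.Rpos
      · have happ : w.symm (w β) = β := w.symm_apply_apply β
        simp only [h, if_true, happ, hβ, if_true]
      · have happ : w.symm (-(w β)) = -β := by rw [map_neg, w.symm_apply_apply]
        have h3 : -β ∉ D.Rpos := not_pos_neg D hu hβ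
        simp only [h, if_false, happ, h3, if_false, neg_neg]
    · intro α hα
      have hαR : α ∈ D.R := D.pos_subset hα
      by_cases h : w.symm α ∈ D.Rpos
      · have happ : w (w.symm α) = α := w.apply_symm_apply α
        simp only [h, if_true, happ, hα, if_true, (hWs α hαR).2]
      · have happ : w (-(w.symm α)) = -α := by rw [map_neg, w.apply_symm_apply]
        have h3 : -α ∉ D.Rpos := not_pos_neg D hu hα
        have hk : D.k (-(w.symm α)) = D.k α := by
          rw [k_neg D (hWs α hαR).1, (hWs α hαR).2]
        simp only [h, if_false, happ, h3, if_false, hk, neg_neg, smul_neg, neg_neg]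
  rw [hsymm, hstep, rhoHO, ← smul_sub, ← Finset.sum_sub_distrib]
  have hterm : ∀ β ∈ D.Rpos,
      D.k β • β - D.k β • (if w β ∈ D.Rpos then β else -β)
        = if w β ∉ D.Rpos then (2 * D.k β) • β else 0 := by
    intro β _
    by_cases h : w β ∈ D.Rpos
    · simp [h]
    · simp only [h, if_false, not_false_iff, if_true, smul_neg, sub_neg_eq_add]
      module
  rw [Finset.sum_congr rfl hterm, ← Finset.sum_filter, Finset.smul_sum]
  refine Finset.sum_congr rfl (fun β _ => ?_)
  rw [smul_smul]
  congr 1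
  ring

lemma chamber_nonneg {x : E} (hx : x ∈ closure (posChamber D)) {β : E} (hβ : β ∈ D.Rpos) :
    0 ≤ ⟪β, x⟫ := by
  have hclosed : IsClosed {y : E | 0 ≤ ⟪β, y⟫} :=
    isClosed_le continuous_const (Continuous.inner continuous_const continuous_id)
  refine closure_minimal ?_ hclosed hx
  intro y hy
  exact le_of_lt (hy β hβ)


end AuxLemmas

/-- with `K' = max_{α ∈ R₀⁺} (ρ, α∨)`, for every `w ∈ W` and `x ∈ ā₊`,
`(ρ,x) - (ρ,wx) ≤ K' · l(w) · max_{α ∈ R₀⁺ ∩ wR⁻} |(α, wx)|`, where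
`l(w) = |R₀⁺ ∩ wR₀⁻|` and the maximum of the empty set is `0`. -/
theorem statement11 (D : HOData E) [Fintype (weylGroup D)] (hne0 : (Rpos0 D).Nonempty)
    (w : weylGroup D) (x : E) (hx : x ∈ closure (posChamber D)) :
    ⟪rhoHO D, x⟫ - ⟪rhoHO D, w.1 x⟫ ≤
      ((Rpos0 D).sup' hne0 (fun α => ⟪rhoHO D, coroot α⟫)) *
      (((Rpos0 D).filter (fun α => -(w.1.symm α) ∈ Rpos0 D)).card : ℝ) *
      (insert (0 : ℝ)
        (((Rpos0 D).filter (fun α => -(w.1.symm α) ∈ D.Rpos)).image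
          (fun α => |⟪α, w.1 x⟫|))).max' (Finset.insert_nonempty _ _) := by
  obtain ⟨u, hu⟩ := D.pos_char
  have hWf := weyl_act D w.1 w.2
  have hWs : ∀ β ∈ D.R, w.1.symm β ∈ D.R ∧ D.k (w.1.symm β) = D.k β := by
    have h := weyl_act D (w.1)⁻¹ (inv_mem w.2)
    exact h
  set K : ℝ := (Rpos0 D).sup' hne0 (fun α => ⟪rhoHO D, coroot α⟫) with hK
  set Mset : Finset ℝ := insert (0 : ℝ)
      (((Rpos0 D).filter (fun α => -(w.1.symm α) ∈ D.Rpos)).image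
        (fun α => |⟪α, w.1 x⟫|)) with hMset
  set M : ℝ := Mset.max' (Finset.insert_nonempty _ _) with hM
  have hM0 : 0 ≤ M := Finset.le_max' _ 0 (Finset.mem_insert_self _ _)
  set T : Finset E := D.Rpos.filter (fun β => w.1 β ∉ D.Rpos) with hT
  set T₀ : Finset E := T.filter (fun β => (2:ℝ)⁻¹ • β ∉ D.R) with hT₀
  set T₁ : Finset E := T.filter (fun β => ¬ ((2:ℝ)⁻¹ • β ∉ D.R)) with hT₁
  -- basic facts about members of T₀
  have hT₀mem : ∀ γ ∈ T₀, γ ∈ Rpos0 D ∧ γ ∈ D.Rpos ∧ w.1 γ ∉ D.Rpos := by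
    intro γ hγ
    have h1 := Finset.mem_filter.mp hγ
    have h2 := Finset.mem_filter.mp h1.1
    exact ⟨Finset.mem_filter.mpr ⟨h2.1, h1.2⟩, h2.1, h2.2⟩
  -- LHS equals the sum over T
  have hLHS : ⟪rhoHO D, x⟫ - ⟪rhoHO D, w.1 x⟫ = ∑ β ∈ T, D.k β * ⟪β, x⟫ := by
    have h1 : ⟪rhoHO D, w.1 x⟫ = ⟪w.1.symm (rhoHO D), x⟫ := by
      rw [← LinearIsometryEquiv.inner_map_map w.1 (w.1.symm (rhoHO D)) x,
        w.1.apply_symm_apply]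
    rw [h1, ← inner_sub_left, rho_sub D w.1 hWf hWs hu, sum_inner]
    exact Finset.sum_congr rfl (fun β _ => real_inner_smul_left _ _ _)
  -- the α attached to γ ∈ T₀
  have hαfact : ∀ γ ∈ T₀,
      (-(w.1 γ) ∈ Rpos0 D) ∧ (-(w.1.symm (-(w.1 γ))) = γ) := by
    intro γ hγ
    obtain ⟨hγ0, hγp, hγw⟩ := hT₀mem γ hγ
    have hγR : γ ∈ D.R := D.pos_subset hγp
    have hwγR : w.1 γ ∈ D.R := (hWf γ hγR).1
    have hαpos : -(w.1 γ) ∈ D.Rpos := neg_pos_of_not_pos D hwγR hγw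
    have hαind : (2:ℝ)⁻¹ • (-(w.1 γ)) ∉ D.R := by
      intro hmem
      have h1 : w.1.symm ((2:ℝ)⁻¹ • (-(w.1 γ))) ∈ D.R := (hWs _ hmem).1
      have h2 : w.1.symm ((2:ℝ)⁻¹ • (-(w.1 γ))) = -((2:ℝ)⁻¹ • γ) := by
        rw [map_smul, map_neg, w.1.symm_apply_apply, smul_neg]
      rw [h2] at h1
      have h3 : (2:ℝ)⁻¹ • γ ∈ D.R := by
        have := D.neg_mem _ h1
        rwa [neg_neg] at this
      exact (Finset.mem_filter.mp hγ0).2 h3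
    refine ⟨Finset.mem_filter.mpr ⟨hαpos, hαind⟩, ?_⟩
    rw [map_neg, w.1.symm_apply_apply, neg_neg]
  -- bound ⟪γ, x⟫ ≤ M for γ ∈ T₀
  have hγM : ∀ γ ∈ T₀, ⟪γ, x⟫ ≤ M := by
    intro γ hγ
    obtain ⟨hγ0, hγp, hγw⟩ := hT₀mem γ hγ
    obtain ⟨hα0, hαγ⟩ := hαfact γ hγ
    have hmemf : -(w.1 γ) ∈ (Rpos0 D).filter (fun α => -(w.1.symm α) ∈ D.Rpos) := by
      refine Finset.mem_filter.mpr ⟨hα0, ?_⟩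
      rw [hαγ]; exact hγp
    have hmemM : |⟪-(w.1 γ), w.1 x⟫| ∈ Mset := by
      rw [hMset]
      exact Finset.mem_insert_of_mem (Finset.mem_image_of_mem _ hmemf)
    have h1 : ⟪γ, x⟫ = -⟪-(w.1 γ), w.1 x⟫ := by
      rw [inner_neg_left, neg_neg, LinearIsometryEquiv.inner_map_map]
    rw [h1]
    calc -⟪-(w.1 γ), w.1 x⟫ ≤ |⟪-(w.1 γ), w.1 x⟫| := neg_le_abs _
    _ ≤ M := Finset.le_max' _ _ hmemM
  -- halving map sends T₁ into T₀
  have hhalf : ∀ β ∈ T₁, (2:ℝ)⁻¹ • β ∈ T₀ := by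
    intro β hβ
    have h1 := Finset.mem_filter.mp hβ
    have h2 := Finset.mem_filter.mp h1.1
    have hβp : β ∈ D.Rpos := h2.1
    have hβR : β ∈ D.R := D.pos_subset hβp
    have hβw : w.1 β ∉ D.Rpos := h2.2
    have hhR : (2:ℝ)⁻¹ • β ∈ D.R := not_not.mp h1.2
    have hhp : (2:ℝ)⁻¹ • β ∈ D.Rpos := by
      refine (hu _ hhR).mpr ?_
      rw [real_inner_smul_left]
      have := inner_u_pos D hu hβp
      positivity
    have hhw : w.1 ((2:ℝ)⁻¹ • β) ∉ D.Rpos := by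
      intro hmem
      apply hβw
      refine (hu _ (hWf β hβR).1).mpr ?_
      have h3 := inner_u_pos D hu hmem
      rw [map_smul, real_inner_smul_left] at h3
      linarith
    have hhind : (2:ℝ)⁻¹ • ((2:ℝ)⁻¹ • β) ∉ D.R := by
      intro hmem
      obtain ⟨n, hn⟩ := D.integral β hβR _ hmem
      have hββ : ⟪β, β⟫ ≠ 0 := fun h => (D.root_ne_zero β hβR) (inner_self_eq_zero.mp h)
      have hval : ⟪coroot β, (2:ℝ)⁻¹ • ((2:ℝ)⁻¹ • β)⟫ = 1/2 := by
        rw [inner_coroot_left, real_inner_smul_right, real_inner_smul_right]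
        field_simp
      rw [hval] at hn
      have h4 : (2 * n : ℤ) = 1 := by
        have : (2 * (n:ℝ)) = 1 := by linarith
        exact_mod_cast this
      omega
    exact Finset.mem_filter.mpr ⟨Finset.mem_filter.mpr ⟨hhp, hhw⟩, hhind⟩
  -- the per-γ coefficient
  set c : E → ℝ := fun γ => (if (2:ℝ) • γ ∈ D.R then 2 * D.k ((2:ℝ) • γ) else 0) with hc
  have hcnonneg : ∀ γ : E, 0 ≤ c γ := by
    intro γ
    rw [hc]
    by_cases h : (2:ℝ) • γ ∈ D.R
    · simp only [h, if_true]
      have := D.k_pos _ h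
      linarith
    · simp [h]
  have hsum1 : ∑ β ∈ T₁, D.k β * ⟪β, x⟫ ≤ ∑ γ ∈ T₀, c γ * ⟪γ, x⟫ := by
    have hstep1 : ∑ β ∈ T₁, D.k β * ⟪β, x⟫
        = ∑ β ∈ T₁, c ((2:ℝ)⁻¹ • β) * ⟪(2:ℝ)⁻¹ • β, x⟫ := by
      refine Finset.sum_congr rfl (fun β hβ => ?_)
      have h1 := Finset.mem_filter.mp hβ
      have h2 := Finset.mem_filter.mp h1.1
      have hβR : β ∈ D.R := D.pos_subset h2.1
      have hdd : (2:ℝ) • ((2:ℝ)⁻¹ • β) = β := by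
        rw [smul_smul]; norm_num
      rw [hc]
      simp only [hdd, hβR, if_true, real_inner_smul_left]
      ring
    have hinj : ∀ β₁ ∈ T₁, ∀ β₂ ∈ T₁, (2:ℝ)⁻¹ • β₁ = (2:ℝ)⁻¹ • β₂ → β₁ = β₂ := by
      intro β₁ _ β₂ _ h
      have := congrArg (fun y => (2:ℝ) • y) h
      simpa [smul_smul] using this
    have hstep2 : ∑ β ∈ T₁, c ((2:ℝ)⁻¹ • β) * ⟪(2:ℝ)⁻¹ • β, x⟫
        = ∑ γ ∈ T₁.image (fun β => (2:ℝ)⁻¹ • β), c γ * ⟪γ, x⟫ :=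
      (Finset.sum_image (f := fun γ => c γ * ⟪γ, x⟫) (g := fun β => (2:ℝ)⁻¹ • β) hinj).symm
    have hsub : T₁.image (fun β => (2:ℝ)⁻¹ • β) ⊆ T₀ := by
      intro γ hγ
      obtain ⟨β, hβ, rfl⟩ := Finset.mem_image.mp hγ
      exact hhalf β hβ
    have hstep3 : ∑ γ ∈ T₁.image (fun β => (2:ℝ)⁻¹ • β), c γ * ⟪γ, x⟫
        ≤ ∑ γ ∈ T₀, c γ * ⟪γ, x⟫ := by
      refine Finset.sum_le_sum_of_subset_of_nonneg hsub (fun γ hγ _ => ?_)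
      exact mul_nonneg (hcnonneg γ) (chamber_nonneg D hx (hT₀mem γ hγ).2.1)
    rw [hstep1, hstep2]
    exact hstep3
  have hsum2 : ∑ γ ∈ T₀, D.k γ * ⟪γ, x⟫ + ∑ γ ∈ T₀, c γ * ⟪γ, x⟫
      = ∑ γ ∈ T₀, (D.k γ + c γ) * ⟪γ, x⟫ := by
    rw [← Finset.sum_add_distrib]
    exact Finset.sum_congr rfl (fun γ _ => by ring)
  have hterm : ∀ γ ∈ T₀, (D.k γ + c γ) * ⟪γ, x⟫ ≤ K * M := by
    intro γ hγ
    obtain ⟨hγ0, hγp, _⟩ := hT₀mem γ hγ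
    have hkey := keyA D hu hγp
    have hsup : ⟪rhoHO D, coroot γ⟫ ≤ K :=
      Finset.le_sup' (fun α => (⟪rhoHO D, coroot α⟫ : ℝ)) hγ0
    have hcK : D.k γ + c γ ≤ K := le_trans hkey hsup
    have hcpos : 0 ≤ D.k γ + c γ :=
      add_nonneg (le_of_lt (D.k_pos γ (D.pos_subset hγp))) (hcnonneg γ)
    exact mul_le_mul hcK (hγM γ hγ) (chamber_nonneg D hx hγp) (le_trans hcpos hcK)
  have hcard : T₀.card = ((Rpos0 D).filter (fun α => -(w.1.symm α) ∈ Rpos0 D)).card := by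
    refine Finset.card_bij (fun γ _ => -(w.1 γ)) ?_ ?_ ?_
    · intro γ hγ
      obtain ⟨hα0, hαγ⟩ := hαfact γ hγ
      refine Finset.mem_filter.mpr ⟨hα0, ?_⟩
      rw [hαγ]
      exact (hT₀mem γ hγ).1
    · intro γ₁ _ γ₂ _ h
      exact w.1.injective (neg_injective h)
    · intro α hα
      have h1 := Finset.mem_filter.mp hα
      have hα0 := h1.1
      have hγ0 := h1.2
      refine ⟨-(w.1.symm α), ?_, ?_⟩
      · have hγp : -(w.1.symm α) ∈ D.Rpos := (Finset.mem_filter.mp hγ0).1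
        have hγind : (2:ℝ)⁻¹ • (-(w.1.symm α)) ∉ D.R := (Finset.mem_filter.mp hγ0).2
        have hαp : α ∈ D.Rpos := (Finset.mem_filter.mp hα0).1
        have hwγ : w.1 (-(w.1.symm α)) ∉ D.Rpos := by
          rw [map_neg, w.1.apply_symm_apply]
          exact not_pos_neg D hu hαp
        exact Finset.mem_filter.mpr ⟨Finset.mem_filter.mpr ⟨hγp, hwγ⟩, hγind⟩
      · show -(w.1 (-(w.1.symm α))) = α
        rw [map_neg, w.1.apply_symm_apply, neg_neg]
  -- put it all together
  rw [hLHS, ← Finset.sum_filter_add_sum_filter_not T (fun β => (2:ℝ)⁻¹ • β ∉ D.R)]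
  calc ∑ γ ∈ T₀, D.k γ * ⟪γ, x⟫ + ∑ β ∈ T₁, D.k β * ⟪β, x⟫
      ≤ ∑ γ ∈ T₀, D.k γ * ⟪γ, x⟫ + ∑ γ ∈ T₀, c γ * ⟪γ, x⟫ := by linarith
    _ = ∑ γ ∈ T₀, (D.k γ + c γ) * ⟪γ, x⟫ := hsum2
    _ ≤ ∑ _γ ∈ T₀, K * M := Finset.sum_le_sum hterm
    _ = (T₀.card : ℝ) * (K * M) := by rw [Finset.sum_const, nsmul_eq_mul]
    _ = K * (T₀.card : ℝ) * M := by ring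
    _ = K * (((Rpos0 D).filter (fun α => -(w.1.symm α) ∈ Rpos0 D)).card : ℝ) * M := by
        rw [hcard]
end
end
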